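/- arXiv:2511.23275 — 5 statements merged into one kernel-verified Lean document; each statement's English description precedes it below -/
import Mathlib

section
/- Let q and p be PMFs on a countable set 𝒳, both strictly positive on 𝒳, and let M be a matching set whose induced graph G is connected. If q(x)/q(x') = p(x)/p(x') for every x ∈ 𝒳 and every x' ∈ M(x), then q(x)·p(x*) = p(x)·q(x*) for every pair x, x* ∈ 𝒳, and consequently q = p. -/
/-- If two strictly positive PMFs `q` and `p` on a countable set have equal
local ratios `q(x)/q(x') = p(x)/p(x')` along a matching set `M` whose induced graph is
connected, then `q(x)·p(x*) = p(x)·q(x*)` for every pair of points, and consequently `q = p`. -/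
theorem ratio_matching_implies_equal
    {𝒳 : Type*} [Countable 𝒳]
    (q p : 𝒳 → ℝ) (M : 𝒳 → Finset 𝒳) (m : ℕ)
    -- q and p are PMFs, strictly positive on 𝒳
    (hq_pos : ∀ x, 0 < q x) (hq_sum : ∑' x, q x = 1)
    (hp_pos : ∀ x, 0 < p x) (hp_sum : ∑' x, p x = 1)
    -- M is a matching set with |M(x)| = m < ∞ for every x
    (hM_card : ∀ x, (M x).card = m)
    -- the induced graph is connected
    (hconn : ∀ x y : 𝒳, Relation.ReflTransGen (fun a b => b ∈ M a ∨ a ∈ M b) x y)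
    -- the local ratios match along the matching set
    (hratio : ∀ x, ∀ x' ∈ M x, q x / q x' = p x / p x') :
    (∀ x xstar : 𝒳, q x * p xstar = p x * q xstar) ∧ q = p := by
  have hedge : ∀ a b : 𝒳, (b ∈ M a ∨ a ∈ M b) → q a * p b = p a * q b := by
    intro a b hab
    rcases hab with h | h
    · have := hratio a b h
      rw [div_eq_div_iff (hq_pos b).ne' (hp_pos b).ne'] at this
      linarith
    · have := hratio b a h
      rw [div_eq_div_iff (hq_pos a).ne' (hp_pos a).ne'] at this
      linarith
  have hmain : ∀ x xstar : 𝒳, q x * p xstar = p x * q xstar := by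
    intro x y
    induction hconn x y with
    | refl => ring
    | tail _ hbc ih =>
      rename_i b c _
      have h2 := hedge b c hbc
      have hpb := (hp_pos b).ne'
      have hqb := (hq_pos b).ne'
      -- q x * p b = p x * q b and q b * p c = p b * q c
      -- want q x * p c = p x * q c
      have : (q x * p c) * (q b * p b) = (p x * q c) * (q b * p b) := by
        calc (q x * p c) * (q b * p b) = (q x * p b) * (q b * p c) := by ring
        _ = (p x * q b) * (p b * q c) := by rw [ih, h2]
        _ = (p x * q c) * (q b * p b) := by ring
      have hne : q b * p b ≠ 0 := mul_ne_zero hqb hpb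
      exact mul_right_cancel₀ hne this
  refine ⟨hmain, ?_⟩
  cases isEmpty_or_nonempty 𝒳 with
  | inl h => funext x; exact (h.false x).elim
  | inr h =>
    obtain ⟨x0⟩ := h
    have hsummable : Summable q := by
      by_contra hs
      rw [tsum_eq_zero_of_not_summable hs] at hq_sum
      norm_num at hq_sum
    have hps : Summable p := by
      by_contra hs
      rw [tsum_eq_zero_of_not_summable hs] at hp_sum
      norm_num at hp_sum
    -- q x = (q x0 / p x0) * p x
    have hqx : ∀ x, q x = (q x0 / p x0) * p x := by
      intro x
      have := hmain x x0
      have hpx0 := (hp_pos x0).ne'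
      field_simp
      linarith [hmain x0 x]
    have : (1 : ℝ) = (q x0 / p x0) * 1 := by
      nth_rewrite 1 [← hq_sum]
      rw [← hp_sum, ← tsum_mul_left]
      exact tsum_congr hqx
    have hc : q x0 / p x0 = 1 := by linarith
    funext x
    rw [hqx x, hc, one_mul]
end

section
/- Suppose p_θ is an exponential family model, i.e. p_θ(x) = exp(η(θ)ᵀT(x) + B(x) − log Z(θ)). Then the LRM loss estimator satisfies L̂_n(θ) = η(θ)ᵀ Λ_n η(θ) − 2 η(θ)ᵀ ν_n + C, where C depends on the data and on q̂ but not on θ, Λ_n := (1/n) Σ_{i=1}^n (1/|M(x_i)|) Σ_{x'∈M(x_i)} (T(x')−T(x_i))(T(x')−T(x_i))ᵀ ∈ ℝ^{p×p}, and ν_n := (1/n) Σ_{i=1}^n (1/|M(x_i)|) Σ_{x'∈M(x_i)} (T(x')−T(x_i)) (log(q̂(x')/q̂(x_i)) − (B(x')−B(x_i))) ∈ ℝ^p. -/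
open Matrix

section Aux

variable {𝒳 : Type*} {n : ℕ} (M : 𝒳 → Finset 𝒳) (xs : Fin n → 𝒳)

/-- The averaging functional used in the LRM loss. -/
noncomputable def lrmS (g : 𝒳 → 𝒳 → ℝ) : ℝ :=
  (1 / (n : ℝ)) * ∑ i : Fin n, (1 / ((M (xs i)).card : ℝ)) * ∑ x' ∈ M (xs i), g (xs i) x'

lemma lrmS_sum {κ : Type*} (s : Finset κ) (f : κ → 𝒳 → 𝒳 → ℝ) :
    ∑ k ∈ s, lrmS M xs (f k) = lrmS M xs (fun a b => ∑ k ∈ s, f k a b) := by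
  unfold lrmS
  simp only [Finset.mul_sum]
  rw [Finset.sum_comm]
  exact Finset.sum_congr rfl fun i _ => Finset.sum_comm

lemma lrmS_smul (c : ℝ) (f : 𝒳 → 𝒳 → ℝ) :
    c * lrmS M xs f = lrmS M xs (fun a b => c * f a b) := by
  unfold lrmS
  simp only [Finset.mul_sum]
  exact Finset.sum_congr rfl fun i _ => Finset.sum_congr rfl fun x' _ => by ring

lemma lrmS_sub (f g : 𝒳 → 𝒳 → ℝ) :
    lrmS M xs f - lrmS M xs g = lrmS M xs (fun a b => f a b - g a b) := by
  unfold lrmS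
  rw [← mul_sub, ← Finset.sum_sub_distrib]
  congr 1
  exact Finset.sum_congr rfl fun i _ => by rw [← mul_sub, ← Finset.sum_sub_distrib]

lemma lrmS_add (f g : 𝒳 → 𝒳 → ℝ) :
    lrmS M xs f + lrmS M xs g = lrmS M xs (fun a b => f a b + g a b) := by
  unfold lrmS
  rw [← mul_add, ← Finset.sum_add_distrib]
  congr 1
  exact Finset.sum_congr rfl fun i _ => by rw [← mul_add, ← Finset.sum_add_distrib]

lemma lrmS_congr (f g : 𝒳 → 𝒳 → ℝ)
    (h : ∀ i : Fin n, ∀ x' ∈ M (xs i), f (xs i) x' = g (xs i) x') :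
    lrmS M xs f = lrmS M xs g := by
  unfold lrmS
  congr 1
  exact Finset.sum_congr rfl fun i _ => by
    congr 1
    exact Finset.sum_congr rfl fun x' hx' => h i x' hx'

end Aux

/-- For an exponential family model
`p_θ(x) = exp(η(θ)ᵀ T(x) + B(x) − log Z(θ))`, the LRM loss estimator is quadratic in the
natural parameter: `L̂_n(θ) = η(θ)ᵀ Λ_n η(θ) − 2 η(θ)ᵀ ν_n + C` for a constant `C` that
depends on the data and on `q̂` but not on `θ`. -/
theorem lrm_loss_quadratic_exponential_family
    {𝒳 : Type*} {Θ : Type*} {p n : ℕ} (hn : 0 < n)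
    -- matching set with |M(x)| = m < ∞
    (M : 𝒳 → Finset 𝒳) (m : ℕ) (hm : 0 < m) (hM_card : ∀ x, (M x).card = m)
    -- exponential family model
    (η : Θ → (Fin p → ℝ)) (T : 𝒳 → (Fin p → ℝ)) (B : 𝒳 → ℝ)
    (Z : Θ → ℝ) (hZ : ∀ θ, 0 < Z θ)
    (pmodel : Θ → 𝒳 → ℝ)
    (hmodel : ∀ θ x, pmodel θ x = Real.exp (η θ ⬝ᵥ T x + B x - Real.log (Z θ)))
    -- observations and a strictly positive PMF estimate
    (xs : Fin n → 𝒳) (qhat : 𝒳 → ℝ) (hqhat : ∀ x, 0 < qhat x)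
    -- the LRM loss estimator
    (Lhat : Θ → ℝ)
    (hLhat : ∀ θ, Lhat θ = (1 / (n : ℝ)) * ∑ i : Fin n, (1 / ((M (xs i)).card : ℝ)) *
        ∑ x' ∈ M (xs i), ((Real.log (pmodel θ x' / pmodel θ (xs i))) ^ 2
          - 2 * Real.log (pmodel θ x' / pmodel θ (xs i)) * Real.log (qhat x' / qhat (xs i))))
    -- the matrix Λ_n and the vector ν_n
    (Λ : Matrix (Fin p) (Fin p) ℝ)
    (hΛ : Λ = Matrix.of fun j k => (1 / (n : ℝ)) * ∑ i : Fin n, (1 / ((M (xs i)).card : ℝ)) *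
        ∑ x' ∈ M (xs i), (T x' j - T (xs i) j) * (T x' k - T (xs i) k))
    (ν : Fin p → ℝ)
    (hν : ν = fun j => (1 / (n : ℝ)) * ∑ i : Fin n, (1 / ((M (xs i)).card : ℝ)) *
        ∑ x' ∈ M (xs i), (T x' j - T (xs i) j) *
          (Real.log (qhat x' / qhat (xs i)) - (B x' - B (xs i)))) :
    ∃ C : ℝ, ∀ θ, Lhat θ = η θ ⬝ᵥ Λ.mulVec (η θ) - 2 * (η θ ⬝ᵥ ν) + C := by
  classical
  refine ⟨lrmS M xs (fun a b => (B b - B a) ^ 2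
      - 2 * (B b - B a) * Real.log (qhat b / qhat a)), fun θ => ?_⟩
  -- log of the likelihood ratio
  have hlog : ∀ a b : 𝒳, Real.log (pmodel θ b / pmodel θ a)
      = (∑ j, η θ j * (T b j - T a j)) + (B b - B a) := by
    intro a b
    rw [hmodel, hmodel, ← Real.exp_sub, Real.log_exp]
    simp only [dotProduct, mul_sub, Finset.sum_sub_distrib]
    ring
  -- the loss as an average
  have hL : Lhat θ = lrmS M xs (fun a b =>
      (Real.log (pmodel θ b / pmodel θ a)) ^ 2
        - 2 * Real.log (pmodel θ b / pmodel θ a) * Real.log (qhat b / qhat a)) := hLhat θ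
  -- the quadratic form as an average
  have hΛ' : ∀ j k, Λ j k = lrmS M xs
      (fun a b => (T b j - T a j) * (T b k - T a k)) := by
    intro j k; rw [hΛ]; rfl
  have hq : η θ ⬝ᵥ Λ.mulVec (η θ) = lrmS M xs
      (fun a b => ∑ j, η θ j * ∑ k, η θ k * ((T b j - T a j) * (T b k - T a k))) := by
    calc η θ ⬝ᵥ Λ.mulVec (η θ)
        = ∑ j, η θ j * ∑ k, Λ j k * η θ k := rfl
      _ = ∑ j, η θ j * ∑ k, lrmS M xs
            (fun a b => η θ k * ((T b j - T a j) * (T b k - T a k))) := by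
          refine Finset.sum_congr rfl fun j _ => ?_
          congr 1
          refine Finset.sum_congr rfl fun k _ => ?_
          rw [hΛ' j k, mul_comm, lrmS_smul]
      _ = ∑ j, η θ j * lrmS M xs
            (fun a b => ∑ k, η θ k * ((T b j - T a j) * (T b k - T a k))) := by
          refine Finset.sum_congr rfl fun j _ => ?_
          rw [lrmS_sum]
      _ = ∑ j, lrmS M xs
            (fun a b => η θ j * ∑ k, η θ k * ((T b j - T a j) * (T b k - T a k))) := by
          refine Finset.sum_congr rfl fun j _ => ?_
          rw [lrmS_smul]
      _ = _ := lrmS_sum M xs _ _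
  -- the linear form as an average
  have hν' : ∀ j, ν j = lrmS M xs (fun a b => (T b j - T a j) *
      (Real.log (qhat b / qhat a) - (B b - B a))) := by
    intro j; rw [hν]; rfl
  have hl : η θ ⬝ᵥ ν = lrmS M xs (fun a b => ∑ j, η θ j * ((T b j - T a j) *
      (Real.log (qhat b / qhat a) - (B b - B a)))) := by
    calc η θ ⬝ᵥ ν = ∑ j, η θ j * ν j := rfl
      _ = ∑ j, lrmS M xs (fun a b => η θ j * ((T b j - T a j) *
            (Real.log (qhat b / qhat a) - (B b - B a)))) := by
          refine Finset.sum_congr rfl fun j _ => ?_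
          rw [hν' j, lrmS_smul]
      _ = _ := lrmS_sum M xs _ _
  rw [hL, hq, hl, lrmS_smul, lrmS_sub, lrmS_add]
  refine lrmS_congr M xs _ _ fun i x' _ => ?_
  set a := xs i
  set b := x'
  rw [hlog a b]
  have hs : ∑ j, η θ j * ∑ k, η θ k * ((T b j - T a j) * (T b k - T a k))
      = (∑ j, η θ j * (T b j - T a j)) ^ 2 := by
    rw [sq, Finset.sum_mul_sum]
    refine Finset.sum_congr rfl fun j _ => ?_
    rw [Finset.mul_sum]
    exact Finset.sum_congr rfl fun k _ => by ring
  have hv : ∑ j, η θ j * ((T b j - T a j) *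
      (Real.log (qhat b / qhat a) - (B b - B a)))
      = (∑ j, η θ j * (T b j - T a j)) *
        (Real.log (qhat b / qhat a) - (B b - B a)) := by
    rw [Finset.sum_mul]
    exact Finset.sum_congr rfl fun j _ => by ring
  rw [hs, hv]
  ring
end

section
/- Let x_1, x_2, … be i.i.d. samples from a PMF q0 on a countable set 𝒳, let M be a matching set with M(x) ⊆ supp(q0) for all x, and let q̂_α be the Laplace-smoothed estimator with α > 0. Then for every ε > 0, sup_{x ∈ 𝒳 : q0(x) ≥ ε} max_{x' ∈ M(x)} | log(q̂_α(x')/q̂_α(x)) − log(q0(x')/q0(x)) | → 0 almost surely as n → ∞. -/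
open MeasureTheory Filter Topology ProbabilityTheory

/-- Uniform almost-sure consistency of the log-ratios of the
Laplace-smoothed estimator on truncated domains: for i.i.d. samples from `q0`, a matching
set `M` contained in the support of `q0`, and smoothing parameter `α > 0`, for every `ε > 0`
the supremum over `{x : q0(x) ≥ ε}` of the maximal log-ratio estimation error along the
matching set tends to `0` almost surely. -/
theorem laplace_estimator_log_ratio_uniform_consistent
    {𝒳 : Type*} [Countable 𝒳] [DecidableEq 𝒳] [MeasurableSpace 𝒳] [MeasurableSingletonClass 𝒳]
    {Ω : Type*} [MeasurableSpace Ω] (μ : Measure Ω) [IsProbabilityMeasure μ]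
    -- q0 is a PMF on 𝒳
    (q0 : 𝒳 → ℝ) (hq0_nonneg : ∀ x, 0 ≤ q0 x) (hq0_sum : ∑' x, q0 x = 1)
    -- matching set with M(x) ⊆ supp(q0) and |M(x)| = m < ∞
    (M : 𝒳 → Finset 𝒳) (m : ℕ) (hm : 0 < m) (hM_card : ∀ x, (M x).card = m)
    (hM_supp : ∀ x, ∀ x' ∈ M x, 0 < q0 x')
    -- i.i.d. observations from q0
    (X : ℕ → Ω → 𝒳)
    (hX_meas : ∀ i, Measurable (X i))
    (hX_dist : ∀ i x, μ (X i ⁻¹' {x}) = ENNReal.ofReal (q0 x))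
    (hX_indep : iIndepFun X μ)
    -- base unnormalised PMF, strictly positive on supp(q0), with finite total mass Z†
    (qdag : 𝒳 → ℝ) (hqdag_nonneg : ∀ x, 0 ≤ qdag x)
    (hqdag_pos : ∀ x, 0 < q0 x → 0 < qdag x)
    (Zdag : ℝ) (hZdag : HasSum qdag Zdag)
    (α : ℝ) (hα : 0 < α)
    -- the Laplace-smoothed estimator based on the first n samples
    (qhat : ℕ → Ω → 𝒳 → ℝ)
    (hqhat : ∀ n ω x, qhat n ω x =
      ((∑ i ∈ Finset.range n, if X i ω = x then (1 : ℝ) else 0) + α * qdag x)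
        / ((n : ℝ) + α * Zdag)) :
    ∀ ε > (0 : ℝ), ∀ᵐ ω ∂μ, ∀ δ > (0 : ℝ), ∃ N : ℕ, ∀ n ≥ N,
      ∀ x : 𝒳, ε ≤ q0 x → ∀ x' ∈ M x,
        |Real.log (qhat n ω x' / qhat n ω x) - Real.log (q0 x' / q0 x)| ≤ δ := by
  have hq0_summable : Summable q0 := by
    by_contra h
    rw [tsum_eq_zero_of_not_summable h] at hq0_sum
    norm_num at hq0_sum
  have hZ0 : 0 ≤ Zdag := hZdag.nonneg hqdag_nonneg
  -- pointwise a.s. convergence of the estimator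
  have key : ∀ y : 𝒳, ∀ᵐ ω ∂μ, Tendsto (fun n => qhat n ω y) atTop (𝓝 (q0 y)) := by
    intro y
    set g : 𝒳 → ℝ := fun z => if z = y then 1 else 0 with hg
    have hgmeas : Measurable g := measurable_of_countable g
    set f : ℕ → Ω → ℝ := fun i ω => if X i ω = y then 1 else 0 with hf
    have hident : ∀ i, IdentDistrib (X i) (X 0) μ μ := by
      intro i
      refine ⟨(hX_meas i).aemeasurable, (hX_meas 0).aemeasurable, ?_⟩
      apply MeasureTheory.Measure.ext_of_singleton
      intro a
      rw [Measure.map_apply (hX_meas i) (measurableSet_singleton a),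
        Measure.map_apply (hX_meas 0) (measurableSet_singleton a), hX_dist, hX_dist]
    have hidentf : ∀ i, IdentDistrib (f i) (f 0) μ μ := fun i => (hident i).comp hgmeas
    have hindep : Pairwise (Function.onFun (IndepFun · · μ) f) := by
      intro i j hij
      exact (hX_indep.indepFun hij).comp hgmeas hgmeas
    have hfind : f 0 = (X 0 ⁻¹' {y}).indicator (fun _ => (1:ℝ)) := by
      ext ω
      by_cases h : X 0 ω = y <;> simp [hf, h, Set.indicator_apply]
    have hint : Integrable (f 0) μ := by
      rw [hfind]
      exact (integrable_const 1).indicator (hX_meas 0 (measurableSet_singleton y))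
    have hmean : μ[f 0] = q0 y := by
      rw [hfind, integral_indicator_const _ (hX_meas 0 (measurableSet_singleton y)),
        measureReal_def, hX_dist, smul_eq_mul, mul_one, ENNReal.toReal_ofReal (hq0_nonneg y)]
    have hslln := strong_law_ae f hint hindep hidentf
    rw [hmean] at hslln
    filter_upwards [hslln] with ω hω
    have h1 : Tendsto (fun n : ℕ =>
        (n:ℝ)⁻¹ * (∑ i ∈ Finset.range n, f i ω) + α * qdag y / n) atTop (𝓝 (q0 y + 0)) := by
      exact (hω.congr (fun n => smul_eq_mul _ _)).add
        (tendsto_const_div_atTop_nhds_zero_nat (α * qdag y))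
    rw [add_zero] at h1
    have h2 : Tendsto (fun n : ℕ => 1 + α * Zdag / n) atTop (𝓝 (1 + 0)) :=
      tendsto_const_nhds.add (tendsto_const_div_atTop_nhds_zero_nat (α * Zdag))
    rw [add_zero] at h2
    have h3 := h1.div h2 (one_ne_zero)
    rw [div_one] at h3
    apply h3.congr'
    filter_upwards [eventually_ge_atTop 1] with n hn
    have hn0 : (0:ℝ) < n := by exact_mod_cast hn
    have hden : (0:ℝ) < (n:ℝ) + α * Zdag := by
      have : 0 ≤ α * Zdag := mul_nonneg hα.le hZ0
      linarith
    rw [hqhat]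
    simp only [Pi.div_apply]
    have hsum : (∑ i ∈ Finset.range n, if X i ω = y then (1:ℝ) else 0)
        = ∑ i ∈ Finset.range n, f i ω := rfl
    rw [← hsum]
    field_simp
  -- finiteness of the truncated domain
  intro ε hε
  have hS : {x : 𝒳 | ε ≤ q0 x}.Finite := by
    have h := hq0_summable.tendsto_cofinite_zero.eventually (gt_mem_nhds hε)
    rw [Filter.eventually_cofinite] at h
    exact h.subset (fun x hx => not_lt.2 hx)
  have hae : ∀ᵐ ω ∂μ, ∀ y : 𝒳, Tendsto (fun n => qhat n ω y) atTop (𝓝 (q0 y)) :=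
    (MeasureTheory.ae_all_iff).2 key
  filter_upwards [hae] with ω hω
  intro δ hδ
  set P : Finset (𝒳 × 𝒳) := hS.toFinset.biUnion (fun x => (M x).image fun x' => (x, x')) with hP
  have hconv : ∀ p ∈ P, ∀ᶠ n in atTop,
      |Real.log (qhat n ω p.2 / qhat n ω p.1) - Real.log (q0 p.2 / q0 p.1)| ≤ δ := by
    intro p hp
    simp only [hP, Finset.mem_biUnion, Finset.mem_image, Set.Finite.mem_toFinset,
      Set.mem_setOf_eq] at hp
    obtain ⟨x, hx, x', hx', hpe⟩ := hp
    subst hpe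
    have hq1 : 0 < q0 x := lt_of_lt_of_le hε hx
    have hq2 : 0 < q0 x' := hM_supp x x' hx'
    have hratio : Tendsto (fun n => qhat n ω x' / qhat n ω x) atTop (𝓝 (q0 x' / q0 x)) :=
      (hω x').div (hω x) hq1.ne'
    have hlog : Tendsto (fun n => Real.log (qhat n ω x' / qhat n ω x)) atTop
        (𝓝 (Real.log (q0 x' / q0 x))) :=
      ((Real.continuousAt_log (ne_of_gt (div_pos hq2 hq1))).tendsto).comp hratio
    have habs : Tendsto (fun n =>
        |Real.log (qhat n ω x' / qhat n ω x) - Real.log (q0 x' / q0 x)|) atTop (𝓝 0) := by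
      have h0 := hlog.sub (tendsto_const_nhds (x := Real.log (q0 x' / q0 x)))
      simpa using h0.abs
    exact (habs.eventually (gt_mem_nhds hδ)).mono (fun n hn => le_of_lt hn)
  have hall := (Filter.eventually_all_finset P).2 hconv
  obtain ⟨N, hN⟩ := Filter.eventually_atTop.1 hall
  refine ⟨N, fun n hn x hx x' hx' => ?_⟩
  have hmem : (x, x') ∈ P := by
    simp only [hP, Finset.mem_biUnion, Finset.mem_image, Set.Finite.mem_toFinset,
      Set.mem_setOf_eq]
    exact ⟨x, hx, x', hx', rfl⟩
  exact hN n hn (x, x') hmem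
end

section
/- Suppose the standing assumptions hold (x_1,…,x_n i.i.d. from q0 with q0 ∈ Q^adm_{q0}(𝒳), every p_θ ∈ Q^adm_{q0}(𝒳), and the PMF estimate q̂_α ∈ Q^adm_{q0}(𝒳) almost surely), together with Assumption A2, Assumption A3, and Assumption A4(r) for r = 0. Then for every θ ∈ Θ, the empirical LRM loss converges pointwise almost surely: L̂_n(θ) → L(θ) as n → ∞. -/
open MeasureTheory Filter Topology ProbabilityTheory

lemma slln_aux {𝒳 : Type*} [Countable 𝒳] [MeasurableSpace 𝒳] [MeasurableSingletonClass 𝒳]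
    {Ω : Type*} [MeasurableSpace Ω] (μ : Measure Ω)
    (q0 : 𝒳 → ℝ) (hq0_nonneg : ∀ x, 0 ≤ q0 x)
    (X : ℕ → Ω → 𝒳) (hX_meas : ∀ i, Measurable (X i))
    (hX_dist : ∀ i x, μ (X i ⁻¹' {x}) = ENNReal.ofReal (q0 x))
    (hX_indep : iIndepFun X μ)
    (f : 𝒳 → ℝ) (hf : Summable fun x => q0 x * |f x|) :
    ∀ᵐ ω ∂μ, Tendsto (fun n => (∑ i ∈ Finset.range n, f (X i ω)) / n) atTop
      (𝓝 (∑' x, q0 x * f x)) := by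
  have hfm : Measurable f := measurable_of_countable f
  set ν : Measure 𝒳 := μ.map (X 0) with hνdef
  have hν : ∀ x, ν {x} = ENNReal.ofReal (q0 x) := by
    intro x
    rw [hνdef, Measure.map_apply (hX_meas 0) (measurableSet_singleton x)]
    exact hX_dist 0 x
  have hsum : Summable fun x => |f x| * q0 x := by
    simpa [mul_comm, abs_mul, abs_of_nonneg (hq0_nonneg _)] using hf.abs
  have hInt : Integrable f ν := by
    refine ⟨hfm.aestronglyMeasurable, ?_⟩
    rw [hasFiniteIntegral_iff_norm]
    calc ∫⁻ a, ENNReal.ofReal ‖f a‖ ∂ν = ∑' a, ENNReal.ofReal ‖f a‖ * ν {a} :=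
          lintegral_countable' _
      _ = ∑' a, ENNReal.ofReal (|f a| * q0 a) := by
          refine tsum_congr fun a => ?_
          rw [hν, Real.norm_eq_abs, ENNReal.ofReal_mul (abs_nonneg _)]
      _ = ENNReal.ofReal (∑' a, |f a| * q0 a) := by
          rw [ENNReal.ofReal_tsum_of_nonneg
            (fun a => mul_nonneg (abs_nonneg _) (hq0_nonneg a)) hsum]
      _ < ⊤ := ENNReal.ofReal_lt_top
  have hIntc : Integrable (f ∘ X 0) μ := by
    rw [← integrable_map_measure hfm.aestronglyMeasurable (hX_meas 0).aemeasurable]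
    exact hInt
  have hident : ∀ i, IdentDistrib (f ∘ X i) (f ∘ X 0) μ μ := by
    intro i
    have base : IdentDistrib (X i) (X 0) μ μ := by
      refine ⟨(hX_meas i).aemeasurable, (hX_meas 0).aemeasurable, ?_⟩
      refine Measure.ext_of_singleton fun x => ?_
      rw [Measure.map_apply (hX_meas i) (measurableSet_singleton x),
        Measure.map_apply (hX_meas 0) (measurableSet_singleton x), hX_dist i, hX_dist 0]
    exact base.comp hfm
  have hindep : Pairwise (Function.onFun (IndepFun · · μ) fun i => f ∘ X i) := fun i j hij =>
    (hX_indep.indepFun hij).comp hfm hfm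
  have key := strong_law_ae_real (fun i => f ∘ X i) hIntc hindep hident
  have hval : μ[f ∘ X 0] = ∑' x, q0 x * f x := by
    have h0 : μ[f ∘ X 0] = ∫ x, f (X 0 x) ∂μ := rfl
    rw [h0, ← integral_map (hX_meas 0).aemeasurable hfm.aestronglyMeasurable, ← hνdef,
      integral_countable' hInt]
    exact tsum_congr fun a => by rw [measureReal_def, hν, ENNReal.toReal_ofReal (hq0_nonneg a), smul_eq_mul]
  rw [hval] at key
  exact key

set_option maxHeartbeats 3200000 in
/-- Almost-sure pointwise convergence of the empirical LRM loss.
Under the standing assumptions (i.i.d. data from an admissible `q0`, admissible model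
family, admissible Laplace-smoothed estimator), Assumption A2, Assumption A3 and
Assumption A4 with `r = 0`, for every `θ ∈ Θ` the empirical LRM loss converges to the
population LRM loss almost surely. -/
theorem lrm_loss_pointwise_convergence
    {𝒳 : Type*} [Countable 𝒳] [DecidableEq 𝒳] [MeasurableSpace 𝒳] [MeasurableSingletonClass 𝒳]
    {Ω : Type*} [MeasurableSpace Ω] (μ : Measure Ω) [IsProbabilityMeasure μ]
    {d : ℕ} (Θ : Set (Fin d → ℝ))
    -- q0 is a PMF on 𝒳
    (q0 : 𝒳 → ℝ) (hq0_nonneg : ∀ x, 0 ≤ q0 x) (hq0_sum : ∑' x, q0 x = 1)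
    -- matching set with M(x) ⊆ supp(q0) and |M(x)| = m < ∞
    (M : 𝒳 → Finset 𝒳) (m : ℕ) (hm : 0 < m) (hM_card : ∀ x, (M x).card = m)
    (hM_supp : ∀ x, ∀ x' ∈ M x, 0 < q0 x')
    -- Standing Assumption (a): q0 ∈ Q^adm_{q0}(𝒳)
    (hq0_adm : Summable fun x => q0 x * ∑ x' ∈ M x, (Real.log (q0 x' / q0 x)) ^ 2)
    -- the model family
    (pθ : (Fin d → ℝ) → 𝒳 → ℝ)
    -- Standing Assumption (b): every p_θ, θ ∈ Θ, lies in Q^adm_{q0}(𝒳)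
    (hpθ_pos : ∀ θ ∈ Θ, ∀ x, 0 < q0 x → 0 < pθ θ x)
    (hpθ_supp : ∀ θ ∈ Θ, ∀ x, 0 < pθ θ x → 0 < q0 x)
    (hpθ_adm : ∀ θ ∈ Θ, Summable fun x => q0 x * ∑ x' ∈ M x, (Real.log (pθ θ x' / pθ θ x)) ^ 2)
    -- i.i.d. observations from q0
    (X : ℕ → Ω → 𝒳)
    (hX_meas : ∀ i, Measurable (X i))
    (hX_dist : ∀ i x, μ (X i ⁻¹' {x}) = ENNReal.ofReal (q0 x))
    (hX_indep : iIndepFun X μ)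
    -- the Laplace-smoothed estimator q̂_α with α > 0
    (α : ℝ) (hα : 0 < α)
    (qdag : 𝒳 → ℝ) (hqdag_nonneg : ∀ x, 0 ≤ qdag x) (hqdag_pos : ∀ x, 0 < q0 x → 0 < qdag x)
    (Zdag : ℝ) (hZdag : HasSum qdag Zdag)
    (qhat : ℕ → Ω → 𝒳 → ℝ)
    (hqhat : ∀ n ω x, qhat n ω x =
      ((∑ i ∈ Finset.range n, if X i ω = x then (1 : ℝ) else 0) + α * qdag x)
        / ((n : ℝ) + α * Zdag))
    -- Standing Assumption (c): q̂_α ∈ Q^adm_{q0}(𝒳) almost surely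
    (hqhat_adm : ∀ n, ∀ᵐ ω ∂μ,
      Summable fun x => q0 x * ∑ x' ∈ M x, (Real.log (qhat n ω x' / qhat n ω x)) ^ 2)
    -- Assumption A2: either 𝒳 is finite, or 𝒳 is countably infinite, q0 is subexponential,
    -- and the log-ratios of q0 and q̂_α grow at most polynomially
    (nrmX : 𝒳 → ℝ) (hnrmX : ∀ x, 0 ≤ nrmX x)
    (hA2 : Finite 𝒳 ∨
      (Infinite 𝒳 ∧ (∃ c > (0 : ℝ), Summable fun x => q0 x * Real.exp (c * nrmX x)) ∧
        ∃ Kq0 > (0 : ℝ), ∃ γ > (1 : ℝ), ∃ Khat : ℕ → ℝ,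
          (∀ n, 0 ≤ Khat n) ∧ IsBoundedUnder (· ≤ ·) atTop Khat ∧
          (∀ x, ∀ x' ∈ M x, |Real.log (q0 x' / q0 x)| ≤ Kq0 * (1 + nrmX x ^ γ)) ∧
          (∀ n ω x, ∀ x' ∈ M x,
            |Real.log (qhat n ω x' / qhat n ω x)| ≤ Khat n * (1 + nrmX x ^ γ))))
    -- the population and empirical LRM losses
    (Lpop : (Fin d → ℝ) → ℝ)
    (hLpop : ∀ θ, Lpop θ = ∑' x, q0 x * ((1 / ((M x).card : ℝ)) *
      ∑ x' ∈ M x, ((Real.log (pθ θ x' / pθ θ x)) ^ 2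
        - 2 * Real.log (pθ θ x' / pθ θ x) * Real.log (q0 x' / q0 x))))
    (Lhat : ℕ → Ω → (Fin d → ℝ) → ℝ)
    (hLhat : ∀ n ω θ, Lhat n ω θ = (1 / (n : ℝ)) * ∑ i ∈ Finset.range n,
      ((1 / ((M (X i ω)).card : ℝ)) * ∑ x' ∈ M (X i ω),
        ((Real.log (pθ θ x' / pθ θ (X i ω))) ^ 2
          - 2 * Real.log (pθ θ x' / pθ θ (X i ω))
              * Real.log (qhat n ω x' / qhat n ω (X i ω)))))
    -- Assumption A3: Θ is open, convex and bounded, and empirical minimisers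
    -- eventually exist almost surely
    (hΘ_open : IsOpen Θ) (hΘ_convex : Convex ℝ Θ) (hΘ_bounded : Bornology.IsBounded Θ)
    (hA3_min : ∀ᵐ ω ∂μ, ∀ᶠ n in atTop, ∃ θ ∈ Θ, IsMinOn (Lhat n ω) Θ θ)
    -- Assumption A4 with r = 0: smoothness of the model and an L²(q0) envelope for the
    -- log-ratios (the 0-th derivative)
    (hA4_smooth : ∀ x, ContDiffOn ℝ 3 (fun θ => pθ θ x) Θ)
    (K : ℕ → 𝒳 → ℝ)
    (hK_L2 : ∀ ρ ≤ 0, Summable fun x => q0 x * (K ρ x) ^ 2)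
    (hA4_bound : ∀ ρ ≤ 0, ∀ x, ∀ x' ∈ M x, ∀ θ ∈ Θ,
      ‖iteratedFDerivWithin ℝ ρ (fun t => Real.log (pθ t x' / pθ t x)) Θ θ‖ ≤ K ρ x) :
    -- conclusion: almost-sure pointwise convergence of the empirical loss
    ∀ θ ∈ Θ, ∀ᵐ ω ∂μ, Tendsto (fun n => Lhat n ω θ) atTop (𝓝 (Lpop θ)) := by
  intro θ hθ
  classical
  have hq0_summable : Summable q0 := by
    by_contra h
    rw [tsum_eq_zero_of_not_summable h] at hq0_sum
    norm_num at hq0_sum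
  have hm' : (0:ℝ) < m := by exact_mod_cast hm
  -- the population integrand φ and the empirical integrand ψ
  obtain ⟨φ, hφdef⟩ : ∃ φ : 𝒳 → ℝ, ∀ x, φ x = (1 / (m : ℝ)) *
      ∑ x' ∈ M x, ((Real.log (pθ θ x' / pθ θ x)) ^ 2
        - 2 * Real.log (pθ θ x' / pθ θ x) * Real.log (q0 x' / q0 x)) := ⟨_, fun _ => rfl⟩
  obtain ⟨ψ, hψdef⟩ : ∃ ψ : ℕ → Ω → 𝒳 → ℝ, ∀ n ω x, ψ n ω x = (1 / (m : ℝ)) *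
      ∑ x' ∈ M x, ((Real.log (pθ θ x' / pθ θ x)) ^ 2
        - 2 * Real.log (pθ θ x' / pθ θ x) * Real.log (qhat n ω x' / qhat n ω x)) :=
    ⟨_, fun _ _ _ => rfl⟩
  -- summability of q0 * |φ|
  have hφ_sum : Summable fun x => q0 x * |φ x| := by
    refine Summable.of_nonneg_of_le (fun x => mul_nonneg (hq0_nonneg x) (abs_nonneg _))
      (fun x => ?_) ((((hpθ_adm θ hθ).mul_left 2).add hq0_adm).mul_left (1 / (m:ℝ)))
    have h1 : |φ x| ≤ (1 / (m:ℝ)) * ∑ x' ∈ M x,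
        (2 * (Real.log (pθ θ x' / pθ θ x)) ^ 2 + (Real.log (q0 x' / q0 x)) ^ 2) := by
      rw [hφdef]
      calc |(1 / (m:ℝ)) * ∑ x' ∈ M x, _| = (1 / (m:ℝ)) * |∑ x' ∈ M x, _| := by
            rw [abs_mul, abs_of_nonneg (by positivity)]
        _ ≤ (1 / (m:ℝ)) * ∑ x' ∈ M x, |(Real.log (pθ θ x' / pθ θ x)) ^ 2
            - 2 * Real.log (pθ θ x' / pθ θ x) * Real.log (q0 x' / q0 x)| := by
            gcongr
            exact Finset.abs_sum_le_sum_abs _ _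
        _ ≤ (1 / (m:ℝ)) * ∑ x' ∈ M x,
            (2 * (Real.log (pθ θ x' / pθ θ x)) ^ 2 + (Real.log (q0 x' / q0 x)) ^ 2) := by
            gcongr with x' hx'
            set a := Real.log (pθ θ x' / pθ θ x)
            set b := Real.log (q0 x' / q0 x)
            calc |a ^ 2 - 2 * a * b| ≤ |a ^ 2| + |2 * a * b| := abs_sub _ _
              _ ≤ 2 * a ^ 2 + b ^ 2 := by
                  rw [abs_of_nonneg (sq_nonneg a)]
                  have h2 : |2 * a * b| = 2 * |a| * |b| := by
                    rw [abs_mul, abs_mul, abs_two]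
                  have h3 : 2 * |a| * |b| ≤ |a| ^ 2 + |b| ^ 2 := by
                    nlinarith [sq_nonneg (|a| - |b|)]
                  rw [h2]
                  nlinarith [sq_abs a, sq_abs b]
    calc q0 x * |φ x| ≤ q0 x * ((1 / (m:ℝ)) * ∑ x' ∈ M x,
          (2 * (Real.log (pθ θ x' / pθ θ x)) ^ 2 + (Real.log (q0 x' / q0 x)) ^ 2)) := by
          exact mul_le_mul_of_nonneg_left h1 (hq0_nonneg x)
      _ = (1 / (m:ℝ)) * (2 * (q0 x * ∑ x' ∈ M x, (Real.log (pθ θ x' / pθ θ x)) ^ 2)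
            + q0 x * ∑ x' ∈ M x, (Real.log (q0 x' / q0 x)) ^ 2) := by
          rw [Finset.sum_add_distrib, ← Finset.mul_sum]
          ring
  have hLpop_eq : Lpop θ = ∑' x, q0 x * φ x := by
    rw [hLpop]
    exact tsum_congr fun x => by rw [hφdef, hM_card]
  -- SLLN for φ
  have E1 : ∀ᵐ ω ∂μ, Tendsto (fun n => (∑ i ∈ Finset.range n, φ (X i ω)) / n) atTop
      (𝓝 (Lpop θ)) := by
    rw [hLpop_eq]
    exact slln_aux μ q0 hq0_nonneg X hX_meas hX_dist hX_indep φ hφ_sum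
  -- SLLN for the counts
  have E2 : ∀ᵐ ω ∂μ, ∀ x0 : 𝒳, Tendsto
      (fun n => (∑ i ∈ Finset.range n, if X i ω = x0 then (1:ℝ) else 0) / n) atTop
      (𝓝 (q0 x0)) := by
    rw [ae_all_iff]
    intro x0
    have hs : Summable fun x => q0 x * |if x = x0 then (1:ℝ) else 0| := by
      refine Summable.of_nonneg_of_le (fun x => mul_nonneg (hq0_nonneg x) (abs_nonneg _))
        (fun x => ?_) hq0_summable
      split <;> simp [hq0_nonneg x]
    have key := slln_aux μ q0 hq0_nonneg X hX_meas hX_dist hX_indep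
      (fun x => if x = x0 then (1:ℝ) else 0) hs
    have hts : ∑' x, q0 x * (if x = x0 then (1:ℝ) else 0) = q0 x0 := by
      rw [tsum_eq_single x0 (fun b hb => by simp [hb])]
      simp
    rw [hts] at key
    exact key
  -- almost surely all samples lie in the support of q0
  have E3 : ∀ᵐ ω ∂μ, ∀ i, 0 < q0 (X i ω) := by
    rw [ae_all_iff]
    intro i
    have hnull : μ (X i ⁻¹' {x | q0 x = 0}) = 0 := by
      have hU : X i ⁻¹' {x | q0 x = 0} = ⋃ x ∈ {x | q0 x = 0}, X i ⁻¹' {x} := by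
        ext ω'; simp
      rw [hU, measure_biUnion_null_iff (Set.to_countable _)]
      intro x hx
      rw [hX_dist i x, Set.mem_setOf_eq.mp hx]
      simp
    have hset : {ω' | ¬ 0 < q0 (X i ω')} = X i ⁻¹' {x | q0 x = 0} := by
      ext ω'
      simp only [Set.mem_setOf_eq, Set.mem_preimage, Set.mem_singleton_iff, not_lt]
      exact ⟨fun h => le_antisymm h (hq0_nonneg _), fun h => le_of_eq h⟩
    rw [ae_iff, hset]
    exact hnull
  -- q̂ converges to q0 pointwise given count convergence
  have hZdag_nonneg : 0 ≤ Zdag := by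
    have h : (0:ℝ) ≤ ∑' x, qdag x := tsum_nonneg hqdag_nonneg
    rwa [hZdag.tsum_eq] at h
  have hqhat_tendsto : ∀ ω, (∀ x : 𝒳, Tendsto
      (fun n => (∑ i ∈ Finset.range n, if X i ω = x then (1:ℝ) else 0) / n) atTop
      (𝓝 (q0 x))) → ∀ x, Tendsto (fun n => qhat n ω x) atTop (𝓝 (q0 x)) := by
    intro ω hc x
    have hnum : Tendsto (fun n : ℕ =>
        (∑ i ∈ Finset.range n, if X i ω = x then (1:ℝ) else 0) / n + α * qdag x / n)
        atTop (𝓝 (q0 x + 0)) := (hc x).add (tendsto_const_div_atTop_nhds_zero_nat _)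
    have hden : Tendsto (fun n : ℕ => 1 + α * Zdag / n) atTop (𝓝 (1 + 0)) :=
      tendsto_const_nhds.add (tendsto_const_div_atTop_nhds_zero_nat _)
    have h := hnum.div hden (by norm_num)
    rw [add_zero, add_zero, div_one] at h
    refine Tendsto.congr' ?_ h
    filter_upwards [eventually_ge_atTop 1] with n hn
    have hn0 : (0:ℝ) < n := by exact_mod_cast hn
    have hden0 : (0:ℝ) < (n : ℝ) + α * Zdag := by
      have := mul_nonneg hα.le hZdag_nonneg
      linarith
    rw [hqhat]
    simp only [Pi.div_apply]
    field_simp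
  -- log-ratio convergence
  have hlog_tendsto : ∀ ω, (∀ x : 𝒳, Tendsto
      (fun n => (∑ i ∈ Finset.range n, if X i ω = x then (1:ℝ) else 0) / n) atTop
      (𝓝 (q0 x))) → ∀ x, 0 < q0 x → ∀ x' ∈ M x, Tendsto
      (fun n => Real.log (qhat n ω x' / qhat n ω x)) atTop
      (𝓝 (Real.log (q0 x' / q0 x))) := by
    intro ω hc x hx x' hx'
    have hdiv := (hqhat_tendsto ω hc x').div (hqhat_tendsto ω hc x) (ne_of_gt hx)
    have hpos : q0 x' / q0 x ≠ 0 := ne_of_gt (div_pos (hM_supp x x' hx') hx)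
    exact (Real.continuousAt_log hpos).tendsto.comp hdiv
  -- ψ converges to φ pointwise on the support
  have hψφ : ∀ ω, (∀ x : 𝒳, Tendsto
      (fun n => (∑ i ∈ Finset.range n, if X i ω = x then (1:ℝ) else 0) / n) atTop
      (𝓝 (q0 x))) → ∀ x, 0 < q0 x →
      Tendsto (fun n => ψ n ω x) atTop (𝓝 (φ x)) := by
    intro ω hc x hx
    have hsum : Tendsto (fun n => ∑ x' ∈ M x,
        ((Real.log (pθ θ x' / pθ θ x)) ^ 2
          - 2 * Real.log (pθ θ x' / pθ θ x) * Real.log (qhat n ω x' / qhat n ω x)))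
        atTop (𝓝 (∑ x' ∈ M x, ((Real.log (pθ θ x' / pθ θ x)) ^ 2
          - 2 * Real.log (pθ θ x' / pθ θ x) * Real.log (q0 x' / q0 x)))) := by
      refine tendsto_finset_sum _ fun x' hx' => ?_
      exact tendsto_const_nhds.sub
        ((hlog_tendsto ω hc x hx x' hx').const_mul _)
    have h2 := hsum.const_mul (1 / (m:ℝ))
    simp only [← hψdef, ← hφdef] at h2
    exact h2
  -- rewriting the empirical loss
  have hLhat_eq : ∀ n ω, Lhat n ω θ = (∑ i ∈ Finset.range n, ψ n ω (X i ω)) / n := by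
    intro n ω
    rw [hLhat, one_div, inv_mul_eq_div]
    congr 1
    exact Finset.sum_congr rfl fun i _ => by rw [hψdef, hM_card]
  have hdecomp : ∀ n ω, Lhat n ω θ - (∑ i ∈ Finset.range n, φ (X i ω)) / n =
      (∑ i ∈ Finset.range n, (ψ n ω (X i ω) - φ (X i ω))) / n := by
    intro n ω
    rw [hLhat_eq, Finset.sum_sub_distrib, sub_div]
  rcases hA2 with hfin | ⟨hinf, ⟨c, hc, hsubexp⟩, Kq0, hKq0, γ, hγ, Khat,
    hKhat_nonneg, hKhat_bdd, hKq0b, hKhatb⟩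
  · -- finite case
    haveI : Fintype 𝒳 := Fintype.ofFinite 𝒳
    filter_upwards [E1, E2, E3] with ω h1 h2 h3
    set T : Finset 𝒳 := Finset.univ.filter (fun x => 0 < q0 x) with hT
    have hTsum : Tendsto (fun n => ∑ x ∈ T, |ψ n ω x - φ x|) atTop (𝓝 0) := by
      have h := tendsto_finset_sum T
        (fun x hx => ((hψφ ω h2 x (Finset.mem_filter.mp hx).2).sub (tendsto_const_nhds (x := φ x))).abs)
      simpa using h
    have hD : Tendsto (fun n => Lhat n ω θ - (∑ i ∈ Finset.range n, φ (X i ω)) / n)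
        atTop (𝓝 0) := by
      refine squeeze_zero_norm' ?_ hTsum
      filter_upwards [eventually_ge_atTop 1] with n hn
      have hn0 : (0:ℝ) < n := by exact_mod_cast hn
      rw [hdecomp]
      have hb : ∀ i ∈ Finset.range n,
          |ψ n ω (X i ω) - φ (X i ω)| ≤ ∑ x ∈ T, |ψ n ω x - φ x| := by
        intro i _
        exact Finset.single_le_sum (f := fun x => |ψ n ω x - φ x|) (fun x _ => abs_nonneg _)
          (Finset.mem_filter.mpr ⟨Finset.mem_univ _, h3 i⟩)
      calc ‖(∑ i ∈ Finset.range n, (ψ n ω (X i ω) - φ (X i ω))) / n‖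
          = |∑ i ∈ Finset.range n, (ψ n ω (X i ω) - φ (X i ω))| / n := by
            rw [Real.norm_eq_abs, abs_div, abs_of_nonneg hn0.le]
        _ ≤ (∑ i ∈ Finset.range n, |ψ n ω (X i ω) - φ (X i ω)|) / n := by
            gcongr
            exact Finset.abs_sum_le_sum_abs _ _
        _ ≤ (∑ i ∈ Finset.range n, ∑ x ∈ T, |ψ n ω x - φ x|) / n := by
            gcongr with i hi
            exact hb i hi
        _ = ∑ x ∈ T, |ψ n ω x - φ x| := by
            rw [Finset.sum_const, Finset.card_range, nsmul_eq_mul]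
            field_simp
    have hfinal := h1.add hD
    rw [add_zero] at hfinal
    refine hfinal.congr fun n => by ring
  · -- infinite case
    have hK0 : ∀ x, ∀ x' ∈ M x, |Real.log (pθ θ x' / pθ θ x)| ≤ K 0 x := by
      intro x x' hx'
      have h := hA4_bound 0 le_rfl x x' hx' θ hθ
      rwa [norm_iteratedFDerivWithin_zero, Real.norm_eq_abs] at h
    have hK0_nonneg : ∀ x, 0 ≤ K 0 x := by
      intro x
      have hne : (M x).Nonempty := Finset.card_pos.mp (by rw [hM_card]; exact hm)
      obtain ⟨x', hx'⟩ := hne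
      exact le_trans (abs_nonneg _) (hK0 x x' hx')
    obtain ⟨G, hGdef⟩ : ∃ G : 𝒳 → ℝ, ∀ x, G x = K 0 x * (1 + nrmX x ^ γ) := ⟨_, fun _ => rfl⟩
    have hγ0 : (0:ℝ) ≤ γ := by linarith
    have hu_nonneg : ∀ x, (0:ℝ) ≤ 1 + nrmX x ^ γ := by
      intro x
      have := Real.rpow_nonneg (hnrmX x) γ
      linarith
    have hG_nonneg : ∀ x, 0 ≤ G x := fun x => by
      rw [hGdef]; exact mul_nonneg (hK0_nonneg x) (hu_nonneg x)
    -- polynomial growth beaten by exponential tails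
    have hpow : ∃ C : ℝ, 0 ≤ C ∧ ∀ t : ℝ, 0 ≤ t → t ^ (2*γ) ≤ C * Real.exp (c * t) := by
      have hlim := tendsto_rpow_mul_exp_neg_mul_atTop_nhds_zero (2*γ) c hc
      obtain ⟨T0, hT0⟩ := eventually_atTop.mp (hlim.eventually_lt_const one_pos)
      refine ⟨(max T0 0) ^ (2*γ) + 1, by positivity, fun t ht => ?_⟩
      have hct : 0 ≤ c * t := mul_nonneg hc.le ht
      have h2exp : (1:ℝ) ≤ Real.exp (c*t) := Real.one_le_exp hct
      have hMnn : (0:ℝ) ≤ (max T0 0) ^ (2*γ) := Real.rpow_nonneg (le_max_right T0 0) _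
      rcases le_total t (max T0 0) with h | h
      · have h1 : t ^ (2*γ) ≤ (max T0 0) ^ (2*γ) :=
          Real.rpow_le_rpow ht h (by positivity)
        nlinarith
      · have h2 := hT0 t (le_trans (le_max_left _ _) h)
        have hexp := Real.exp_pos (c*t)
        rw [neg_mul, Real.exp_neg] at h2
        have h3 : t ^ (2*γ) < Real.exp (c*t) := by
          have h4 : t ^ (2*γ) = t ^ (2*γ) * (Real.exp (c*t))⁻¹ * Real.exp (c*t) := by
            field_simp
          rw [h4]
          calc t ^ (2*γ) * (Real.exp (c*t))⁻¹ * Real.exp (c*t) < 1 * Real.exp (c*t) :=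
                mul_lt_mul_of_pos_right h2 hexp
            _ = Real.exp (c*t) := one_mul _
        nlinarith
    have hsq_nrm : Summable fun x => q0 x * (1 + nrmX x ^ γ)^2 := by
      obtain ⟨C, hC0, hC⟩ := hpow
      refine Summable.of_nonneg_of_le (fun x => mul_nonneg (hq0_nonneg x) (sq_nonneg _))
        (fun x => ?_) (hsubexp.mul_left (2 + 2*C))
      have hu : (0:ℝ) ≤ nrmX x ^ γ := Real.rpow_nonneg (hnrmX x) γ
      have hsq : (nrmX x ^ γ)^2 = nrmX x ^ (2*γ) := by
        rw [← Real.rpow_natCast (nrmX x ^ γ) 2, ← Real.rpow_mul (hnrmX x)]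
        norm_num [mul_comm]
      have h1 := hC (nrmX x) (hnrmX x)
      rw [← hsq] at h1
      have h2 : (1:ℝ) ≤ Real.exp (c * nrmX x) := Real.one_le_exp (mul_nonneg hc.le (hnrmX x))
      have h3 : (1 + nrmX x ^ γ)^2 ≤ (2 + 2*C) * Real.exp (c * nrmX x) := by
        nlinarith [sq_nonneg (1 - nrmX x ^ γ)]
      calc q0 x * (1 + nrmX x ^ γ)^2 ≤ q0 x * ((2 + 2*C) * Real.exp (c * nrmX x)) :=
            mul_le_mul_of_nonneg_left h3 (hq0_nonneg x)
        _ = (2 + 2*C) * (q0 x * Real.exp (c * nrmX x)) := by ring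
    have hG_sum : Summable fun x => q0 x * G x := by
      refine Summable.of_nonneg_of_le (fun x => mul_nonneg (hq0_nonneg x) (hG_nonneg x))
        (fun x => ?_) (((hK_L2 0 le_rfl).mul_left (1/2)).add (hsq_nrm.mul_left (1/2)))
      rw [hGdef]
      have h1 : K 0 x * (1 + nrmX x ^ γ) ≤ (1/2) * (K 0 x)^2 + (1/2) * (1 + nrmX x ^ γ)^2 := by
        nlinarith [sq_nonneg (K 0 x - (1 + nrmX x ^ γ))]
      calc q0 x * (K 0 x * (1 + nrmX x ^ γ))
          ≤ q0 x * ((1/2)*(K 0 x)^2 + (1/2)*(1 + nrmX x ^ γ)^2) :=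
            mul_le_mul_of_nonneg_left h1 (hq0_nonneg x)
        _ = 1/2 * (q0 x * K 0 x ^ 2) + 1/2 * (q0 x * (1 + nrmX x ^ γ)^2) := by ring
    -- an exhaustion of 𝒳 by finite sets
    haveI := hinf
    obtain ⟨e, he⟩ := exists_surjective_nat 𝒳
    choose g hg using he
    set F : ℕ → Finset 𝒳 := fun k => (Finset.range k).image e with hF
    have hF_tendsto : Tendsto F atTop atTop := by
      refine tendsto_atTop_atTop.mpr fun s =>
        ⟨(s.sup g) + 1, fun n hn => Finset.le_iff_subset.mpr fun x hx => ?_⟩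
      refine Finset.mem_image.mpr ⟨g x, Finset.mem_range.mpr ?_, hg x⟩
      have h := Finset.le_sup (f := g) hx
      omega
    have htail_eq : ∀ k, ∑' x, q0 x * (if x ∈ F k then 0 else G x) =
        (∑' x, q0 x * G x) - ∑ x ∈ F k, q0 x * G x := by
      intro k
      have h1 : Summable fun x => if x ∈ F k then q0 x * G x else 0 :=
        summable_of_ne_finset_zero (s := F k) (fun x hx => if_neg hx)
      have h2 : (fun x => q0 x * (if x ∈ F k then 0 else G x)) =
          fun x => q0 x * G x - (if x ∈ F k then q0 x * G x else 0) := by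
        funext x; by_cases hx : x ∈ F k <;> simp [hx]
      rw [h2, hG_sum.tsum_sub h1, tsum_eq_sum (s := F k) (fun x hx => if_neg hx)]
      congr 1
      exact Finset.sum_congr rfl fun b hb => if_pos hb
    have htail : Tendsto (fun k => ∑' x, q0 x * (if x ∈ F k then 0 else G x)) atTop (𝓝 0) := by
      have h3 : Tendsto (fun k => ∑ x ∈ F k, q0 x * G x) atTop (𝓝 (∑' x, q0 x * G x)) :=
        (hG_sum.hasSum).comp hF_tendsto
      have h4 := (tendsto_const_nhds (x := ∑' x, q0 x * G x) (f := (atTop : Filter ℕ))).sub h3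
      rw [sub_self] at h4
      exact h4.congr fun k => (htail_eq k).symm
    -- SLLN for the truncated envelopes
    have E4 : ∀ᵐ ω ∂μ, ∀ k : ℕ, Tendsto
        (fun n => (∑ i ∈ Finset.range n, (if X i ω ∈ F k then 0 else G (X i ω))) / n) atTop
        (𝓝 (∑' x, q0 x * (if x ∈ F k then 0 else G x))) := by
      rw [ae_all_iff]
      intro k
      have hs : Summable fun x => q0 x * |if x ∈ F k then 0 else G x| := by
        refine Summable.of_nonneg_of_le (fun x => mul_nonneg (hq0_nonneg x) (abs_nonneg _))
          (fun x => ?_) hG_sum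
        have hle : |if x ∈ F k then 0 else G x| ≤ G x := by
          split
          · simpa using hG_nonneg x
          · rw [abs_of_nonneg (hG_nonneg x)]
        exact mul_le_mul_of_nonneg_left hle (hq0_nonneg x)
      exact slln_aux μ q0 hq0_nonneg X hX_meas hX_dist hX_indep _ hs
    obtain ⟨B, hB⟩ := hKhat_bdd
    have hBev : ∀ᶠ n in atTop, Khat n ≤ max B 0 :=
      (Filter.eventually_map.mp hB).mono fun n hn => le_trans hn (le_max_left _ _)
    filter_upwards [E1, E2, E3, E4] with ω h1 h2 h3 h4
    have hD : Tendsto (fun n => Lhat n ω θ - (∑ i ∈ Finset.range n, φ (X i ω)) / n)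
        atTop (𝓝 0) := by
      rw [NormedAddCommGroup.tendsto_nhds_zero]
      intro ε hε
      set B' := max B 0 with hB'def
      have hB'0 : (0:ℝ) ≤ B' := le_max_right _ _
      set Cst : ℝ := 2 * (B' + Kq0) + 1 with hCstdef
      have hCst_pos : 0 < Cst := by rw [hCstdef]; nlinarith
      set η : ℝ := ε / (4 * Cst) with hηdef
      have hηpos : 0 < η := by rw [hηdef]; positivity
      obtain ⟨k, hk⟩ := (htail.eventually_lt_const hηpos).exists
      set T : Finset 𝒳 := (F k).filter (fun x => 0 < q0 x) with hT
      have hTsum : Tendsto (fun n => ∑ x ∈ T, |ψ n ω x - φ x|) atTop (𝓝 0) := by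
        have h := tendsto_finset_sum T
          (fun x hx => ((hψφ ω h2 x (Finset.mem_filter.mp hx).2).sub
            (tendsto_const_nhds (x := φ x))).abs)
        simpa using h
      have hev1 := hTsum.eventually_lt_const (show (0:ℝ) < ε/2 by positivity)
      have hev2 := (h4 k).eventually_lt_const
        (lt_add_of_pos_right (∑' x, q0 x * (if x ∈ F k then 0 else G x)) hηpos)
      filter_upwards [hev1, hev2, hBev, eventually_ge_atTop 1] with n hn1 hn2 hnB hnge
      have hn0 : (0:ℝ) < n := by exact_mod_cast hnge
      rw [hdecomp]
      have hterm : ∀ i ∈ Finset.range n, |ψ n ω (X i ω) - φ (X i ω)| ≤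
          (∑ x ∈ T, |ψ n ω x - φ x|) + Cst * (if X i ω ∈ F k then 0 else G (X i ω)) := by
        intro i _
        by_cases hmem : X i ω ∈ F k
        · rw [if_pos hmem, mul_zero, add_zero]
          exact Finset.single_le_sum (f := fun x => |ψ n ω x - φ x|) (fun x _ => abs_nonneg _)
            (Finset.mem_filter.mpr ⟨hmem, h3 i⟩)
        · rw [if_neg hmem]
          have hTnonneg : (0:ℝ) ≤ ∑ x ∈ T, |ψ n ω x - φ x| :=
            Finset.sum_nonneg fun x _ => abs_nonneg _
          have hcore : |ψ n ω (X i ω) - φ (X i ω)| ≤ Cst * G (X i ω) := by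
            set x := X i ω with hxdef
            have hdiff : ψ n ω x - φ x = (1/(m:ℝ)) * ∑ x' ∈ M x,
                (2 * Real.log (pθ θ x' / pθ θ x) * Real.log (q0 x' / q0 x)
                 - 2 * Real.log (pθ θ x' / pθ θ x) * Real.log (qhat n ω x' / qhat n ω x)) := by
              rw [hψdef, hφdef, ← mul_sub, ← Finset.sum_sub_distrib]
              congr 1
              exact Finset.sum_congr rfl fun x' _ => by ring
            have hper : ∀ x' ∈ M x,
                |2 * Real.log (pθ θ x' / pθ θ x) * Real.log (q0 x' / q0 x)
                 - 2 * Real.log (pθ θ x' / pθ θ x) * Real.log (qhat n ω x' / qhat n ω x)|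
                ≤ 2 * (B' + Kq0) * (K 0 x * (1 + nrmX x ^ γ)) := by
              intro x' hx'
              have hl := hK0 x x' hx'
              have hr1 := hKq0b x x' hx'
              have hr2 : |Real.log (qhat n ω x' / qhat n ω x)| ≤ B' * (1 + nrmX x ^ γ) :=
                le_trans (hKhatb n ω x x' hx')
                  (mul_le_mul_of_nonneg_right hnB (hu_nonneg x))
              have e1 : 2 * Real.log (pθ θ x' / pθ θ x) * Real.log (q0 x' / q0 x)
                  - 2 * Real.log (pθ θ x' / pθ θ x) * Real.log (qhat n ω x' / qhat n ω x)
                  = 2 * Real.log (pθ θ x' / pθ θ x) *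
                    (Real.log (q0 x' / q0 x) - Real.log (qhat n ω x' / qhat n ω x)) := by
                ring
              rw [e1, abs_mul, abs_mul, abs_two]
              have hab : |Real.log (q0 x' / q0 x) - Real.log (qhat n ω x' / qhat n ω x)|
                  ≤ Kq0 * (1 + nrmX x ^ γ) + B' * (1 + nrmX x ^ γ) :=
                le_trans (abs_sub _ _) (add_le_add hr1 hr2)
              calc 2 * |Real.log (pθ θ x' / pθ θ x)|
                    * |Real.log (q0 x' / q0 x) - Real.log (qhat n ω x' / qhat n ω x)|
                  ≤ 2 * K 0 x * (Kq0 * (1 + nrmX x ^ γ) + B' * (1 + nrmX x ^ γ)) := by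
                    have h2K : 2 * |Real.log (pθ θ x' / pθ θ x)| ≤ 2 * K 0 x := by linarith
                    exact mul_le_mul h2K hab (abs_nonneg _)
                      (by linarith [hK0_nonneg x])
                _ = 2 * (B' + Kq0) * (K 0 x * (1 + nrmX x ^ γ)) := by ring
            have hGx : G x = K 0 x * (1 + nrmX x ^ γ) := hGdef x
            calc |ψ n ω x - φ x|
                = (1/(m:ℝ)) * |∑ x' ∈ M x,
                    (2 * Real.log (pθ θ x' / pθ θ x) * Real.log (q0 x' / q0 x)
                     - 2 * Real.log (pθ θ x' / pθ θ x)
                       * Real.log (qhat n ω x' / qhat n ω x))| := by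
                  rw [hdiff, abs_mul, abs_of_nonneg (by positivity : (0:ℝ) ≤ 1/(m:ℝ))]
              _ ≤ (1/(m:ℝ)) * ∑ x' ∈ M x,
                  |2 * Real.log (pθ θ x' / pθ θ x) * Real.log (q0 x' / q0 x)
                   - 2 * Real.log (pθ θ x' / pθ θ x)
                     * Real.log (qhat n ω x' / qhat n ω x)| := by
                  gcongr
                  exact Finset.abs_sum_le_sum_abs _ _
              _ ≤ (1/(m:ℝ)) * ∑ _x' ∈ M x, (2 * (B' + Kq0) * (K 0 x * (1 + nrmX x ^ γ))) := by
                  gcongr with x' hx'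
                  exact hper x' hx'
              _ = 2 * (B' + Kq0) * (K 0 x * (1 + nrmX x ^ γ)) := by
                  rw [Finset.sum_const, hM_card, nsmul_eq_mul]
                  field_simp
              _ ≤ Cst * G x := by
                  rw [hGx, hCstdef]
                  have := hG_nonneg x
                  rw [hGx] at this
                  nlinarith
          linarith
      have hunn : (0:ℝ) ≤ (∑ i ∈ Finset.range n,
          (if X i ω ∈ F k then 0 else G (X i ω))) / n := by
        apply div_nonneg _ hn0.le
        apply Finset.sum_nonneg
        intro i _
        split
        · norm_num
        · exact hG_nonneg _
      have hfin : Cst * ((∑' x, q0 x * (if x ∈ F k then 0 else G x)) + η) ≤ ε / 2 := by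
        have h5 : (∑' x, q0 x * (if x ∈ F k then 0 else G x)) + η ≤ 2 * η := by linarith
        have h6 : Cst * ((∑' x, q0 x * (if x ∈ F k then 0 else G x)) + η) ≤ Cst * (2 * η) :=
          mul_le_mul_of_nonneg_left h5 hCst_pos.le
        have h7 : Cst * (2 * η) = ε / 2 := by
          rw [hηdef]
          field_simp
          ring
        exact le_trans h6 (le_of_eq h7)
      calc ‖(∑ i ∈ Finset.range n, (ψ n ω (X i ω) - φ (X i ω))) / n‖
          = |∑ i ∈ Finset.range n, (ψ n ω (X i ω) - φ (X i ω))| / n := by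
            rw [Real.norm_eq_abs, abs_div, abs_of_nonneg hn0.le]
        _ ≤ (∑ i ∈ Finset.range n, |ψ n ω (X i ω) - φ (X i ω)|) / n := by
            gcongr
            exact Finset.abs_sum_le_sum_abs _ _
        _ ≤ (∑ i ∈ Finset.range n, ((∑ x ∈ T, |ψ n ω x - φ x|)
              + Cst * (if X i ω ∈ F k then 0 else G (X i ω)))) / n := by
            gcongr with i hi
            exact hterm i hi
        _ = (∑ x ∈ T, |ψ n ω x - φ x|)
              + Cst * ((∑ i ∈ Finset.range n, (if X i ω ∈ F k then 0 else G (X i ω))) / n) := by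
            rw [Finset.sum_add_distrib, Finset.sum_const, Finset.card_range, nsmul_eq_mul,
              ← Finset.mul_sum, add_div]
            congr 1
            · field_simp
            · rw [mul_div_assoc]
        _ < ε/2 + Cst * ((∑' x, q0 x * (if x ∈ F k then 0 else G x)) + η) := by
            refine add_lt_add_of_lt_of_le hn1 (mul_le_mul_of_nonneg_left hn2.le hCst_pos.le)
        _ ≤ ε/2 + ε/2 := by linarith [hfin]
        _ = ε := by ring
    have hfinal := h1.add hD
    rw [add_zero] at hfinal
    refine hfinal.congr fun n => by ring
end

section
/- Suppose the standing assumptions hold, together with Assumption A2, Assumption A3, Assumption A4(r) for r = 1, and Assumption A5 (existence of empirical minimisers θ̂_n of L̂_n for all n and a unique well-separated population minimiser θ*). Then the empirical minimiser is strongly consistent: θ̂_n → θ* almost surely as n → ∞. -/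
/-- The Euclidean (ℓ²) norm on `Fin d → ℝ`. -/
noncomputable def l2norm {d : ℕ} (v : Fin d → ℝ) : ℝ := Real.sqrt (∑ j, v j ^ 2)

open MeasureTheory Filter Topology ProbabilityTheory

open scoped ENNReal NNReal



lemma norm_le_l2norm {d : ℕ} (v : Fin d → ℝ) : ‖v‖ ≤ l2norm v := by
  have h0 : 0 ≤ l2norm v := Real.sqrt_nonneg _
  rw [pi_norm_le_iff_of_nonneg h0]
  intro i
  rw [Real.norm_eq_abs, ← Real.sqrt_sq_eq_abs]
  exact Real.sqrt_le_sqrt (Finset.single_le_sum (fun j _ => sq_nonneg (v j)) (Finset.mem_univ i))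

lemma l2norm_nonneg {d : ℕ} (v : Fin d → ℝ) : 0 ≤ l2norm v := Real.sqrt_nonneg _

lemma abs_tsum_le_tsum_of_le {𝒳 : Type*} {g b : 𝒳 → ℝ} (hb : Summable b) (h : ∀ x, |g x| ≤ b x) :
    |∑' x, g x| ≤ ∑' x, b x := by
  have habs : Summable fun x => |g x| :=
    Summable.of_nonneg_of_le (fun x => abs_nonneg _) h hb
  have hn : Summable fun x => ‖g x‖ := by simpa only [Real.norm_eq_abs] using habs
  have h2 := norm_tsum_le_tsum_norm hn
  rw [Real.norm_eq_abs] at h2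
  calc |∑' x, g x| ≤ ∑' x, ‖g x‖ := h2
    _ = ∑' x, |g x| := by simp only [Real.norm_eq_abs]
    _ ≤ ∑' x, b x := Summable.tsum_le_tsum h habs hb

lemma summable_q_mul_of_sq {𝒳 : Type*} {q A B : 𝒳 → ℝ} (hq : ∀ x, 0 ≤ q x)
    (hA : Summable fun x => q x * A x ^ 2) (hB : Summable fun x => q x * B x ^ 2) :
    Summable fun x => q x * (|A x| * |B x|) := by
  refine Summable.of_nonneg_of_le (fun x => mul_nonneg (hq x) (by positivity)) (fun x => ?_)
    (((hA.add hB).div_const 2))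
  have h1 : |A x| * |B x| ≤ (A x ^ 2 + B x ^ 2) / 2 := by
    nlinarith [sq_nonneg (|A x| - |B x|), sq_abs (A x), sq_abs (B x),
      abs_nonneg (A x), abs_nonneg (B x)]
  calc q x * (|A x| * |B x|) ≤ q x * ((A x ^ 2 + B x ^ 2) / 2) :=
        mul_le_mul_of_nonneg_left h1 (hq x)
    _ = (q x * A x ^ 2 + q x * B x ^ 2) / 2 := by ring

lemma exists_sq_one_add_rpow_le_exp {γ c : ℝ} (hγ : 0 < γ) (hc : 0 < c) :
    ∃ C : ℝ, 0 ≤ C ∧ ∀ t : ℝ, 0 ≤ t → (1 + t ^ γ) ^ 2 ≤ C * Real.exp (c * t) := by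
  have h0 : Tendsto (fun t : ℝ => t ^ (2 * γ) * Real.exp (-c * t)) atTop (𝓝 0) :=
    tendsto_rpow_mul_exp_neg_mul_atTop_nhds_zero (2 * γ) c hc
  have h1 : ∀ᶠ t in atTop, t ^ (2 * γ) * Real.exp (-c * t) < 1 :=
    h0.eventually_lt_const (by norm_num)
  obtain ⟨T, hT⟩ := eventually_atTop.mp h1
  have hcont : ContinuousOn (fun t : ℝ => t ^ (2 * γ) * Real.exp (-c * t)) (Set.Icc 0 T) := by
    refine ContinuousOn.mul (ContinuousOn.rpow_const continuousOn_id
      (fun x hx => Or.inr (by positivity))) (Continuous.continuousOn (by continuity))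
  obtain ⟨C0, hC0⟩ := isCompact_Icc.exists_bound_of_continuousOn hcont
  set C1 : ℝ := max C0 1 with hC1
  have hkey : ∀ t : ℝ, 0 ≤ t → t ^ (2 * γ) * Real.exp (-c * t) ≤ C1 := by
    intro t ht
    rcases le_or_gt t T with h | h
    · have h4 := hC0 t ⟨ht, h⟩
      rw [Real.norm_eq_abs] at h4
      exact le_trans (le_trans (le_abs_self _) h4) (le_max_left _ _)
    · exact le_trans (hT t h.le).le (le_max_right _ _)
  refine ⟨2 + 2 * C1, by positivity, fun t ht => ?_⟩
  have hexp : (0:ℝ) < Real.exp (c * t) := Real.exp_pos _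
  have h2γ : t ^ (2 * γ) ≤ C1 * Real.exp (c * t) := by
    have := hkey t ht
    have hinv : Real.exp (-c * t) = (Real.exp (c * t))⁻¹ := by
      rw [← Real.exp_neg]; ring_nf
    rw [hinv] at this
    calc t ^ (2*γ) = t ^ (2*γ) * (Real.exp (c*t))⁻¹ * Real.exp (c*t) := by
          field_simp
      _ ≤ C1 * Real.exp (c * t) := by
          exact mul_le_mul_of_nonneg_right this hexp.le
  have hsq : (t ^ γ) ^ 2 = t ^ (2 * γ) := by
    rw [← Real.rpow_natCast (t ^ γ) 2, ← Real.rpow_mul ht]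
    norm_num [mul_comm]
  have h2u : 2 * t ^ γ ≤ t ^ (2 * γ) + 1 := by
    have := two_mul_le_add_sq (t ^ γ) 1
    nlinarith [hsq]
  have hone : (1:ℝ) ≤ Real.exp (c * t) := Real.one_le_exp (by positivity)
  nlinarith [hsq, h2γ, hone]

lemma slln_discrete {𝒳 : Type*} [Countable 𝒳] [MeasurableSpace 𝒳] [MeasurableSingletonClass 𝒳]
    {Ω : Type*} [MeasurableSpace Ω] (μ : Measure Ω) [IsProbabilityMeasure μ]
    (q0 : 𝒳 → ℝ) (hq0_nonneg : ∀ x, 0 ≤ q0 x)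
    (X : ℕ → Ω → 𝒳) (hX_meas : ∀ i, Measurable (X i))
    (hX_dist : ∀ i x, μ (X i ⁻¹' {x}) = ENNReal.ofReal (q0 x))
    (hX_indep : iIndepFun X μ)
    (f : 𝒳 → ℝ) (hf : Summable fun x => q0 x * |f x|) :
    ∀ᵐ ω ∂μ, Tendsto (fun n : ℕ => (n : ℝ)⁻¹ * ∑ i ∈ Finset.range n, f (X i ω)) atTop
      (𝓝 (∑' x, q0 x * f x)) := by
  have hfm : Measurable f := measurable_of_countable f
  have hmap : ∀ i, μ.map (X i) = μ.map (X 0) := by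
    intro i
    refine MeasureTheory.Measure.ext_of_singleton (fun x => ?_)
    rw [Measure.map_apply (hX_meas i) (measurableSet_singleton x),
        Measure.map_apply (hX_meas 0) (measurableSet_singleton x), hX_dist, hX_dist]
  have hsingleton : ∀ x : 𝒳, μ.map (X 0) {x} = ENNReal.ofReal (q0 x) := fun x => by
    rw [Measure.map_apply (hX_meas 0) (measurableSet_singleton x), hX_dist]
  have hident : ∀ i, IdentDistrib (X i) (X 0) μ μ := fun i =>
    ⟨(hX_meas i).aemeasurable, (hX_meas 0).aemeasurable, hmap i⟩
  have hint0 : Integrable f (μ.map (X 0)) := by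
    refine ⟨hfm.aestronglyMeasurable, ?_⟩
    show (∫⁻ x, ‖f x‖₊ ∂(μ.map (X 0))) < ⊤
    rw [MeasureTheory.lintegral_countable']
    have heq : ∀ x : 𝒳, (‖f x‖₊ : ℝ≥0∞) * (μ.map (X 0)) {x} = ENNReal.ofReal (q0 x * |f x|) := by
      intro x
      rw [hsingleton, ← enorm_eq_nnnorm, Real.enorm_eq_ofReal_abs, ← ENNReal.ofReal_mul (abs_nonneg _), mul_comm]
    calc ∑' x, (‖f x‖₊ : ℝ≥0∞) * (μ.map (X 0)) {x}
        = ∑' x, ENNReal.ofReal (q0 x * |f x|) := tsum_congr heq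
      _ = ENNReal.ofReal (∑' x, q0 x * |f x|) :=
          (ENNReal.ofReal_tsum_of_nonneg (fun x => mul_nonneg (hq0_nonneg x) (abs_nonneg _)) hf).symm
      _ < ⊤ := ENNReal.ofReal_lt_top
  have hint : Integrable (fun ω => f (X 0 ω)) μ :=
    (integrable_map_measure hfm.aestronglyMeasurable (hX_meas 0).aemeasurable).mp hint0
  have hintegral : ∫ ω, f (X 0 ω) ∂μ = ∑' x, q0 x * f x := by
    rw [← integral_map (hX_meas 0).aemeasurable hfm.aestronglyMeasurable,
      integral_countable' hint0]
    exact tsum_congr fun x => by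
      rw [measureReal_def, hsingleton, ENNReal.toReal_ofReal (hq0_nonneg x), smul_eq_mul]
  have hslln := strong_law_ae_real (fun i ω => f (X i ω)) hint
      (fun i j hij => (hX_indep.indepFun hij).comp hfm hfm)
      (fun i => (hident i).comp hfm)
  filter_upwards [hslln] with ω hω
  have : (∫ ω, f (X 0 ω) ∂μ) = ∑' x, q0 x * f x := hintegral
  rw [this] at hω
  refine hω.congr (fun n => ?_)
  rw [div_eq_inv_mul]


section auxlemmas

lemma quad_env {p w K0 : ℝ} (hp : |p| ≤ K0) : |p ^ 2 - 2 * p * w| ≤ K0 ^ 2 + 2 * K0 * |w| := by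
  have h0 : 0 ≤ K0 := le_trans (abs_nonneg p) hp
  have hsq : p ^ 2 ≤ K0 ^ 2 := by nlinarith [sq_abs p, mul_self_le_mul_self (abs_nonneg p) hp]
  have hpw : |p * w| ≤ K0 * |w| := by
    rw [abs_mul]; exact mul_le_mul_of_nonneg_right hp (abs_nonneg w)
  have h1 := le_abs_self (p * w)
  have h2 := neg_abs_le (p * w)
  refine abs_le.mpr ⟨by nlinarith [sq_nonneg p, abs_nonneg w], by nlinarith⟩

lemma quad_diff_le {p q w K0 L : ℝ} (hK0 : 0 ≤ K0) (hL : 0 ≤ L)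
    (hp : |p| ≤ K0) (hq : |q| ≤ K0) (hpq : |p - q| ≤ L) :
    |(p ^ 2 - 2 * p * w) - (q ^ 2 - 2 * q * w)| ≤ L * (2 * K0 + 2 * |w|) := by
  have h1 : (p ^ 2 - 2 * p * w) - (q ^ 2 - 2 * q * w) = (p - q) * (p + q - 2 * w) := by ring
  rw [h1, abs_mul]
  have hpl := abs_le.mp hp
  have hql := abs_le.mp hq
  have hw1 := le_abs_self w
  have hw2 := neg_abs_le w
  have h2 : |p + q - 2 * w| ≤ 2 * K0 + 2 * |w| :=
    abs_le.mpr ⟨by linarith, by linarith⟩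
  exact mul_le_mul hpq h2 (abs_nonneg _) hL

lemma quad_diff_le2 {p uu vv K0 : ℝ} (hp : |p| ≤ K0) :
    |(p ^ 2 - 2 * p * vv) - (p ^ 2 - 2 * p * uu)| ≤ 2 * K0 * |vv - uu| := by
  have h1 : (p ^ 2 - 2 * p * vv) - (p ^ 2 - 2 * p * uu) = -(2 * p * (vv - uu)) := by ring
  rw [h1, abs_neg, abs_mul, abs_mul, abs_two]
  nlinarith [abs_nonneg (vv - uu), abs_nonneg p]

lemma lip_of_iterated {d : ℕ} (Θ : Set (Fin d → ℝ)) (hopen : IsOpen Θ) (hconv : Convex ℝ Θ)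
    (f : (Fin d → ℝ) → ℝ) (C : ℝ) (hC : 0 ≤ C)
    (hdiff : DifferentiableOn ℝ f Θ)
    (hbound : ∀ θ ∈ Θ, ‖iteratedFDerivWithin ℝ 1 f Θ θ‖ ≤ C) :
    ∀ θ ∈ Θ, ∀ θ' ∈ Θ, |f θ - f θ'| ≤ C * ‖θ - θ'‖ := by
  intro θ hθ θ' hθ'
  have hb : ∀ t ∈ Θ, ‖fderivWithin ℝ f Θ t‖ ≤ C := by
    intro t ht
    refine ContinuousLinearMap.opNorm_le_bound _ hC (fun w => ?_)
    have h2 : fderivWithin ℝ f Θ t w = iteratedFDerivWithin ℝ 1 f Θ t (fun _ => w) := by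
      rw [iteratedFDerivWithin_one_apply (hopen.uniqueDiffWithinAt ht)]
    rw [h2]
    calc ‖iteratedFDerivWithin ℝ 1 f Θ t (fun _ => w)‖
        ≤ ‖iteratedFDerivWithin ℝ 1 f Θ t‖ * ∏ _i : Fin 1, ‖w‖ :=
          (iteratedFDerivWithin ℝ 1 f Θ t).le_opNorm _
      _ = ‖iteratedFDerivWithin ℝ 1 f Θ t‖ * ‖w‖ := by simp
      _ ≤ C * ‖w‖ := mul_le_mul_of_nonneg_right (hbound t ht) (norm_nonneg w)
  have := hconv.norm_image_sub_le_of_norm_fderivWithin_le hdiff hb hθ' hθ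
  simpa [Real.norm_eq_abs] using this

noncomputable def hhat {𝒳 : Type*} {d : ℕ} (M : 𝒳 → Finset 𝒳) (m : ℕ)
    (pθ : (Fin d → ℝ) → 𝒳 → ℝ) (qh : 𝒳 → ℝ) (θ : Fin d → ℝ) (x : 𝒳) : ℝ :=
  (1 / (m : ℝ)) * ∑ x' ∈ M x, ((Real.log (pθ θ x' / pθ θ x)) ^ 2
    - 2 * Real.log (pθ θ x' / pθ θ x) * Real.log (qh x' / qh x))

noncomputable def deltaa {𝒳 : Type*} (M : 𝒳 → Finset 𝒳) (m : ℕ)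
    (q0 qh : 𝒳 → ℝ) (x : 𝒳) : ℝ :=
  (1 / (m : ℝ)) * ∑ x' ∈ M x, |Real.log (qh x' / qh x) - Real.log (q0 x' / q0 x)|

noncomputable def asum {𝒳 : Type*} (M : 𝒳 → Finset 𝒳) (m : ℕ) (qh : 𝒳 → ℝ) (x : 𝒳) : ℝ :=
  (1 / (m : ℝ)) * ∑ x' ∈ M x, |Real.log (qh x' / qh x)|

lemma asum_nonneg {𝒳 : Type*} (M : 𝒳 → Finset 𝒳) (m : ℕ) (qh : 𝒳 → ℝ) (x : 𝒳) :
    0 ≤ asum M m qh x := by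
  unfold asum
  exact mul_nonneg (by positivity) (Finset.sum_nonneg fun _ _ => abs_nonneg _)

lemma deltaa_nonneg {𝒳 : Type*} (M : 𝒳 → Finset 𝒳) (m : ℕ) (q0 qh : 𝒳 → ℝ) (x : 𝒳) :
    0 ≤ deltaa M m q0 qh x := by
  unfold deltaa
  exact mul_nonneg (by positivity) (Finset.sum_nonneg fun _ _ => abs_nonneg _)

lemma hhat_abs_le {𝒳 : Type*} {d : ℕ} (M : 𝒳 → Finset 𝒳) (m : ℕ) (hm : 0 < m)
    (pθ : (Fin d → ℝ) → 𝒳 → ℝ) (qh : 𝒳 → ℝ) (θ : Fin d → ℝ) (x : 𝒳)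
    (hcard : (M x).card = m) (K0x : ℝ)
    (hK : ∀ x' ∈ M x, |Real.log (pθ θ x' / pθ θ x)| ≤ K0x) :
    |hhat M m pθ qh θ x| ≤ K0x ^ 2 + 2 * K0x * asum M m qh x := by
  have hm' : (0 : ℝ) < (m : ℝ) := by exact_mod_cast hm
  unfold hhat asum
  rw [abs_mul, abs_of_nonneg (by positivity : (0:ℝ) ≤ 1 / (m:ℝ))]
  have h1 : |∑ x' ∈ M x, ((Real.log (pθ θ x' / pθ θ x)) ^ 2
      - 2 * Real.log (pθ θ x' / pθ θ x) * Real.log (qh x' / qh x))|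
      ≤ ∑ x' ∈ M x, (K0x ^ 2 + 2 * K0x * |Real.log (qh x' / qh x)|) :=
    le_trans (Finset.abs_sum_le_sum_abs _ _)
      (Finset.sum_le_sum fun x' hx' => quad_env (hK x' hx'))
  have h2 : ∑ x' ∈ M x, (K0x ^ 2 + 2 * K0x * |Real.log (qh x' / qh x)|)
      = (m : ℝ) * K0x ^ 2 + 2 * K0x * ∑ x' ∈ M x, |Real.log (qh x' / qh x)| := by
    rw [Finset.sum_add_distrib, Finset.sum_const, hcard, nsmul_eq_mul, ← Finset.mul_sum]
  calc (1 / (m:ℝ)) * |∑ x' ∈ M x, ((Real.log (pθ θ x' / pθ θ x)) ^ 2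
      - 2 * Real.log (pθ θ x' / pθ θ x) * Real.log (qh x' / qh x))|
      ≤ (1 / (m:ℝ)) * ((m : ℝ) * K0x ^ 2 + 2 * K0x * ∑ x' ∈ M x, |Real.log (qh x' / qh x)|) := by
        rw [← h2]; exact mul_le_mul_of_nonneg_left h1 (by positivity)
    _ = K0x ^ 2 + 2 * K0x * ((1 / (m:ℝ)) * ∑ x' ∈ M x, |Real.log (qh x' / qh x)|) := by
        field_simp

lemma hhat_lip_le {𝒳 : Type*} {d : ℕ} (M : 𝒳 → Finset 𝒳) (m : ℕ) (hm : 0 < m)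
    (pθ : (Fin d → ℝ) → 𝒳 → ℝ) (qh : 𝒳 → ℝ) (θ θ' : Fin d → ℝ) (x : 𝒳)
    (hcard : (M x).card = m) (K0x L : ℝ) (hK0x : 0 ≤ K0x) (hL : 0 ≤ L)
    (hKθ : ∀ x' ∈ M x, |Real.log (pθ θ x' / pθ θ x)| ≤ K0x)
    (hKθ' : ∀ x' ∈ M x, |Real.log (pθ θ' x' / pθ θ' x)| ≤ K0x)
    (hlip : ∀ x' ∈ M x, |Real.log (pθ θ x' / pθ θ x) - Real.log (pθ θ' x' / pθ θ' x)| ≤ L) :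
    |hhat M m pθ qh θ x - hhat M m pθ qh θ' x| ≤ L * (2 * K0x + 2 * asum M m qh x) := by
  have hm' : (0 : ℝ) < (m : ℝ) := by exact_mod_cast hm
  unfold hhat asum
  rw [← mul_sub, ← Finset.sum_sub_distrib, abs_mul,
    abs_of_nonneg (by positivity : (0:ℝ) ≤ 1 / (m:ℝ))]
  have h1 : |∑ x' ∈ M x, (((Real.log (pθ θ x' / pθ θ x)) ^ 2
        - 2 * Real.log (pθ θ x' / pθ θ x) * Real.log (qh x' / qh x))
      - ((Real.log (pθ θ' x' / pθ θ' x)) ^ 2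
        - 2 * Real.log (pθ θ' x' / pθ θ' x) * Real.log (qh x' / qh x)))|
      ≤ ∑ x' ∈ M x, (L * (2 * K0x + 2 * |Real.log (qh x' / qh x)|)) :=
    le_trans (Finset.abs_sum_le_sum_abs _ _)
      (Finset.sum_le_sum fun x' hx' =>
        quad_diff_le hK0x hL (hKθ x' hx') (hKθ' x' hx') (hlip x' hx'))
  have h2 : ∑ x' ∈ M x, (L * (2 * K0x + 2 * |Real.log (qh x' / qh x)|))
      = (m : ℝ) * (L * 2 * K0x) + L * 2 * ∑ x' ∈ M x, |Real.log (qh x' / qh x)| := by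
    have hcg : ∀ x' ∈ M x, L * (2 * K0x + 2 * |Real.log (qh x' / qh x)|)
        = L * 2 * K0x + L * 2 * |Real.log (qh x' / qh x)| := fun x' _ => by ring
    rw [Finset.sum_congr rfl hcg, Finset.sum_add_distrib, Finset.sum_const, hcard,
      nsmul_eq_mul, ← Finset.mul_sum]
  calc (1 / (m:ℝ)) * |∑ x' ∈ M x, (((Real.log (pθ θ x' / pθ θ x)) ^ 2
        - 2 * Real.log (pθ θ x' / pθ θ x) * Real.log (qh x' / qh x))
      - ((Real.log (pθ θ' x' / pθ θ' x)) ^ 2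
        - 2 * Real.log (pθ θ' x' / pθ θ' x) * Real.log (qh x' / qh x)))|
      ≤ (1 / (m:ℝ)) * ((m : ℝ) * (L * 2 * K0x) + L * 2 * ∑ x' ∈ M x, |Real.log (qh x' / qh x)|) := by
        rw [← h2]; exact mul_le_mul_of_nonneg_left h1 (by positivity)
    _ = L * (2 * K0x + 2 * ((1 / (m:ℝ)) * ∑ x' ∈ M x, |Real.log (qh x' / qh x)|)) := by
        field_simp

lemma hhat_sub_le {𝒳 : Type*} {d : ℕ} (M : 𝒳 → Finset 𝒳) (m : ℕ) (hm : 0 < m)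
    (pθ : (Fin d → ℝ) → 𝒳 → ℝ) (q0 qh : 𝒳 → ℝ) (θ : Fin d → ℝ) (x : 𝒳)
    (hcard : (M x).card = m) (K0x : ℝ)
    (hK : ∀ x' ∈ M x, |Real.log (pθ θ x' / pθ θ x)| ≤ K0x) :
    |hhat M m pθ qh θ x - hhat M m pθ q0 θ x| ≤ 2 * K0x * deltaa M m q0 qh x := by
  have hm' : (0 : ℝ) < (m : ℝ) := by exact_mod_cast hm
  unfold hhat deltaa
  rw [← mul_sub, ← Finset.sum_sub_distrib, abs_mul,
    abs_of_nonneg (by positivity : (0:ℝ) ≤ 1 / (m:ℝ))]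
  have h1 : |∑ x' ∈ M x, (((Real.log (pθ θ x' / pθ θ x)) ^ 2
        - 2 * Real.log (pθ θ x' / pθ θ x) * Real.log (qh x' / qh x))
      - ((Real.log (pθ θ x' / pθ θ x)) ^ 2
        - 2 * Real.log (pθ θ x' / pθ θ x) * Real.log (q0 x' / q0 x)))|
      ≤ ∑ x' ∈ M x, (2 * K0x * |Real.log (qh x' / qh x) - Real.log (q0 x' / q0 x)|) :=
    le_trans (Finset.abs_sum_le_sum_abs _ _)
      (Finset.sum_le_sum fun x' hx' => quad_diff_le2 (hK x' hx'))
  calc (1 / (m:ℝ)) * |∑ x' ∈ M x, (((Real.log (pθ θ x' / pθ θ x)) ^ 2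
        - 2 * Real.log (pθ θ x' / pθ θ x) * Real.log (qh x' / qh x))
      - ((Real.log (pθ θ x' / pθ θ x)) ^ 2
        - 2 * Real.log (pθ θ x' / pθ θ x) * Real.log (q0 x' / q0 x)))|
      ≤ (1 / (m:ℝ)) * ∑ x' ∈ M x, (2 * K0x * |Real.log (qh x' / qh x) - Real.log (q0 x' / q0 x)|) :=
        mul_le_mul_of_nonneg_left h1 (by positivity)
    _ = 2 * K0x * ((1 / (m:ℝ)) * ∑ x' ∈ M x, |Real.log (qh x' / qh x) - Real.log (q0 x' / q0 x)|) := by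
        rw [← Finset.mul_sum]; ring

end auxlemmas


set_option maxHeartbeats 1600000 in
/-- Strong consistency of the LRM minimum-loss estimator. Under the
standing assumptions, Assumption A2, Assumption A3, Assumption A4 with `r = 1`, and
Assumption A5 (existence of empirical minimisers `θ̂_n` and a unique well-separated
population minimiser `θ*`), the empirical minimiser satisfies `θ̂_n → θ*` almost surely. -/
theorem lrm_estimator_strong_consistency
    {𝒳 : Type*} [Countable 𝒳] [DecidableEq 𝒳] [MeasurableSpace 𝒳] [MeasurableSingletonClass 𝒳]
    {Ω : Type*} [MeasurableSpace Ω] (μ : Measure Ω) [IsProbabilityMeasure μ]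
    {d : ℕ} (Θ : Set (Fin d → ℝ))
    -- q0 is a PMF on 𝒳
    (q0 : 𝒳 → ℝ) (hq0_nonneg : ∀ x, 0 ≤ q0 x) (hq0_sum : ∑' x, q0 x = 1)
    -- matching set with M(x) ⊆ supp(q0) and |M(x)| = m < ∞
    (M : 𝒳 → Finset 𝒳) (m : ℕ) (hm : 0 < m) (hM_card : ∀ x, (M x).card = m)
    (hM_supp : ∀ x, ∀ x' ∈ M x, 0 < q0 x')
    -- Standing Assumption (a): q0 ∈ Q^adm_{q0}(𝒳)
    (hq0_adm : Summable fun x => q0 x * ∑ x' ∈ M x, (Real.log (q0 x' / q0 x)) ^ 2)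
    -- the model family
    (pθ : (Fin d → ℝ) → 𝒳 → ℝ)
    -- Standing Assumption (b): every p_θ, θ ∈ Θ, lies in Q^adm_{q0}(𝒳)
    (hpθ_pos : ∀ θ ∈ Θ, ∀ x, 0 < q0 x → 0 < pθ θ x)
    (hpθ_supp : ∀ θ ∈ Θ, ∀ x, 0 < pθ θ x → 0 < q0 x)
    (hpθ_adm : ∀ θ ∈ Θ, Summable fun x => q0 x * ∑ x' ∈ M x, (Real.log (pθ θ x' / pθ θ x)) ^ 2)
    -- i.i.d. observations from q0
    (X : ℕ → Ω → 𝒳)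
    (hX_meas : ∀ i, Measurable (X i))
    (hX_dist : ∀ i x, μ (X i ⁻¹' {x}) = ENNReal.ofReal (q0 x))
    (hX_indep : iIndepFun X μ)
    -- the Laplace-smoothed estimator q̂_α with α > 0
    (α : ℝ) (hα : 0 < α)
    (qdag : 𝒳 → ℝ) (hqdag_nonneg : ∀ x, 0 ≤ qdag x) (hqdag_pos : ∀ x, 0 < q0 x → 0 < qdag x)
    (Zdag : ℝ) (hZdag : HasSum qdag Zdag)
    (qhat : ℕ → Ω → 𝒳 → ℝ)
    (hqhat : ∀ n ω x, qhat n ω x =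
      ((∑ i ∈ Finset.range n, if X i ω = x then (1 : ℝ) else 0) + α * qdag x)
        / ((n : ℝ) + α * Zdag))
    -- Standing Assumption (c): q̂_α ∈ Q^adm_{q0}(𝒳) almost surely
    (hqhat_adm : ∀ n, ∀ᵐ ω ∂μ,
      Summable fun x => q0 x * ∑ x' ∈ M x, (Real.log (qhat n ω x' / qhat n ω x)) ^ 2)
    -- Assumption A2: either 𝒳 is finite, or 𝒳 is countably infinite, q0 is subexponential,
    -- and the log-ratios of q0 and q̂_α grow at most polynomially
    (nrmX : 𝒳 → ℝ) (hnrmX : ∀ x, 0 ≤ nrmX x)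
    (hA2 : Finite 𝒳 ∨
      (Infinite 𝒳 ∧ (∃ c > (0 : ℝ), Summable fun x => q0 x * Real.exp (c * nrmX x)) ∧
        ∃ Kq0 > (0 : ℝ), ∃ γ > (1 : ℝ), ∃ Khat : ℕ → ℝ,
          (∀ n, 0 ≤ Khat n) ∧ IsBoundedUnder (· ≤ ·) atTop Khat ∧
          (∀ x, ∀ x' ∈ M x, |Real.log (q0 x' / q0 x)| ≤ Kq0 * (1 + nrmX x ^ γ)) ∧
          (∀ n ω x, ∀ x' ∈ M x,
            |Real.log (qhat n ω x' / qhat n ω x)| ≤ Khat n * (1 + nrmX x ^ γ))))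
    -- the population and empirical LRM losses
    (Lpop : (Fin d → ℝ) → ℝ)
    (hLpop : ∀ θ, Lpop θ = ∑' x, q0 x * ((1 / ((M x).card : ℝ)) *
      ∑ x' ∈ M x, ((Real.log (pθ θ x' / pθ θ x)) ^ 2
        - 2 * Real.log (pθ θ x' / pθ θ x) * Real.log (q0 x' / q0 x))))
    (Lhat : ℕ → Ω → (Fin d → ℝ) → ℝ)
    (hLhat : ∀ n ω θ, Lhat n ω θ = (1 / (n : ℝ)) * ∑ i ∈ Finset.range n,
      ((1 / ((M (X i ω)).card : ℝ)) * ∑ x' ∈ M (X i ω),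
        ((Real.log (pθ θ x' / pθ θ (X i ω))) ^ 2
          - 2 * Real.log (pθ θ x' / pθ θ (X i ω))
              * Real.log (qhat n ω x' / qhat n ω (X i ω)))))
    -- Assumption A3: Θ is open, convex and bounded, and empirical minimisers
    -- eventually exist almost surely
    (hΘ_open : IsOpen Θ) (hΘ_convex : Convex ℝ Θ) (hΘ_bounded : Bornology.IsBounded Θ)
    (hA3_min : ∀ᵐ ω ∂μ, ∀ᶠ n in atTop, ∃ θ ∈ Θ, IsMinOn (Lhat n ω) Θ θ)
    -- Assumption A4 with r = 0: smoothness of the model and an L²(q0) envelope for the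
    -- log-ratios (derivatives of order 0 and 1)
    (hA4_smooth : ∀ x, ContDiffOn ℝ 3 (fun θ => pθ θ x) Θ)
    (K : ℕ → 𝒳 → ℝ)
    (hK_L2 : ∀ ρ ≤ 1, Summable fun x => q0 x * (K ρ x) ^ 2)
    (hA4_bound : ∀ ρ ≤ 1, ∀ x, ∀ x' ∈ M x, ∀ θ ∈ Θ,
      ‖iteratedFDerivWithin ℝ ρ (fun t => Real.log (pθ t x' / pθ t x)) Θ θ‖ ≤ K ρ x)
    -- Assumption A5: empirical minimisers θ̂_n exist for all n, and there is a unique,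
    -- well-separated population minimiser θ*
    (θhat : ℕ → Ω → (Fin d → ℝ))
    (hθhat : ∀ n ω, θhat n ω ∈ Θ ∧ IsMinOn (Lhat n ω) Θ (θhat n ω))
    (θstar : Fin d → ℝ) (hθstar_mem : θstar ∈ Θ) (hθstar_min : IsMinOn Lpop Θ θstar)
    (hθstar_sep : ∀ ε > (0 : ℝ), ∃ δ > (0 : ℝ), ∀ θ ∈ Θ,
      ε ≤ l2norm (θ - θstar) → Lpop θstar + δ ≤ Lpop θ) :
    -- conclusion: strong consistency of the empirical minimiser
    ∀ᵐ ω ∂μ, Tendsto (fun n => θhat n ω) atTop (𝓝 θstar) := by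
  classical
  -- ## Preliminaries
  have hm' : (0:ℝ) < (m:ℝ) := by exact_mod_cast hm
  have hq0_summable : Summable q0 := by
    by_contra hns
    rw [tsum_eq_zero_of_not_summable hns] at hq0_sum
    norm_num at hq0_sum
  obtain ⟨x0, hx0⟩ : ∃ x, 0 < q0 x := by
    by_contra hno
    push_neg at hno
    have hz : ∀ x, q0 x = 0 := fun x => le_antisymm (hno x) (hq0_nonneg x)
    have hzz : (∑' x, q0 x) = 0 := by simp [hz]
    rw [hzz] at hq0_sum; norm_num at hq0_sum
  have hZ : 0 < Zdag :=
    lt_of_lt_of_le (hqdag_pos x0 hx0) (le_hasSum hZdag x0 fun _ _ => hqdag_nonneg _)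
  set S : Set 𝒳 := {x | 0 < q0 x} with hSdef
  have hx0S : x0 ∈ S := hx0
  have hq0_of_not_mem : ∀ x ∉ S, q0 x = 0 := fun x hx =>
    le_antisymm (not_lt.mp hx) (hq0_nonneg x)
  have hMS : ∀ x, ∀ x' ∈ M x, x' ∈ S := fun x x' hx' => hM_supp x x' hx'
  have hMne : ∀ x, (M x).Nonempty := fun x => Finset.card_pos.mp (by rw [hM_card x]; exact hm)
  -- ## Envelopes
  have hK0 : ∀ (x x' : 𝒳), x' ∈ M x → ∀ θ ∈ Θ, |Real.log (pθ θ x' / pθ θ x)| ≤ K 0 x := by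
    intro x x' hx' θ hθ
    have h := hA4_bound 0 (by norm_num) x x' hx' θ hθ
    rwa [norm_iteratedFDerivWithin_zero, Real.norm_eq_abs] at h
  have hK0n : ∀ x, 0 ≤ K 0 x := fun x =>
    le_trans (abs_nonneg _) (hK0 x _ (hMne x).choose_spec θstar hθstar_mem)
  have hK1n : ∀ x, 0 ≤ K 1 x := fun x =>
    le_trans (norm_nonneg _) (hA4_bound 1 le_rfl x _ (hMne x).choose_spec θstar hθstar_mem)
  have hr_lip : ∀ x ∈ S, ∀ x' ∈ M x, ∀ θ ∈ Θ, ∀ θ' ∈ Θ,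
      |Real.log (pθ θ x' / pθ θ x) - Real.log (pθ θ' x' / pθ θ' x)| ≤ K 1 x * ‖θ - θ'‖ := by
    intro x hx x' hx'
    have h1 : DifferentiableOn ℝ (fun t => pθ t x') Θ :=
      (hA4_smooth x').differentiableOn (by norm_num)
    have h2 : DifferentiableOn ℝ (fun t => pθ t x) Θ :=
      (hA4_smooth x).differentiableOn (by norm_num)
    have hsub : DifferentiableOn ℝ (fun t => Real.log (pθ t x') - Real.log (pθ t x)) Θ :=
      (h1.log fun t ht => ne_of_gt (hpθ_pos t ht x' (hMS x x' hx'))).sub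
        (h2.log fun t ht => ne_of_gt (hpθ_pos t ht x hx))
    have hlog : DifferentiableOn ℝ (fun t => Real.log (pθ t x' / pθ t x)) Θ := by
      refine hsub.congr fun t ht => ?_
      rw [Real.log_div (ne_of_gt (hpθ_pos t ht x' (hMS x x' hx'))) (ne_of_gt (hpθ_pos t ht x hx))]
    exact lip_of_iterated Θ hΘ_open hΘ_convex _ (K 1 x) (hK1n x) hlog
      (fun θ hθ => hA4_bound 1 le_rfl x x' hx' θ hθ)
  set Hf : 𝒳 → ℝ := fun x => K 0 x ^ 2 + 2 * K 0 x * asum M m q0 x with hHfdef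
  set lf : 𝒳 → ℝ := fun x => 2 * K 1 x * (K 0 x + asum M m q0 x) with hlfdef
  have hlf_nonneg : ∀ x, 0 ≤ lf x := fun x => by
    rw [hlfdef]
    have := hK1n x; have := hK0n x; have := asum_nonneg M m q0 x
    positivity
  have hh_env : ∀ θ ∈ Θ, ∀ x, |hhat M m pθ q0 θ x| ≤ Hf x := by
    intro θ hθ x
    rw [hHfdef]
    exact hhat_abs_le M m hm pθ q0 θ x (hM_card x) (K 0 x)
      (fun x' hx' => hK0 x x' hx' θ hθ)
  have hh_lip : ∀ x ∈ S, ∀ θ ∈ Θ, ∀ θ' ∈ Θ,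
      |hhat M m pθ q0 θ x - hhat M m pθ q0 θ' x| ≤ lf x * ‖θ - θ'‖ := by
    intro x hx θ hθ θ' hθ'
    have h := hhat_lip_le M m hm pθ q0 θ θ' x (hM_card x) (K 0 x) (K 1 x * ‖θ - θ'‖)
      (hK0n x) (mul_nonneg (hK1n x) (norm_nonneg _))
      (fun x' hx' => hK0 x x' hx' θ hθ) (fun x' hx' => hK0 x x' hx' θ' hθ')
      (fun x' hx' => hr_lip x hx x' hx' θ hθ θ' hθ')
    calc |hhat M m pθ q0 θ x - hhat M m pθ q0 θ' x|
        ≤ K 1 x * ‖θ - θ'‖ * (2 * K 0 x + 2 * asum M m q0 x) := h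
      _ = lf x * ‖θ - θ'‖ := by rw [hlfdef]; ring
  -- ## Summability facts
  have hsum0 : Summable fun x => q0 x * K 0 x ^ 2 := hK_L2 0 (by norm_num)
  have hsum1 : Summable fun x => q0 x * K 1 x ^ 2 := hK_L2 1 le_rfl
  have hsuma : Summable fun x => q0 x * asum M m q0 x ^ 2 := by
    refine Summable.of_nonneg_of_le (fun x => mul_nonneg (hq0_nonneg x) (sq_nonneg _))
      (fun x => ?_) (hq0_adm.mul_left ((1:ℝ)/(m:ℝ)))
    have h1 : (∑ x' ∈ M x, |Real.log (q0 x' / q0 x)|) ^ 2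
        ≤ (m:ℝ) * ∑ x' ∈ M x, (Real.log (q0 x' / q0 x)) ^ 2 := by
      have h2 := sq_sum_le_card_mul_sum_sq
        (s := M x) (f := fun x' => |Real.log (q0 x' / q0 x)|)
      rw [hM_card] at h2
      simpa [sq_abs] using h2
    show q0 x * asum M m q0 x ^ 2 ≤ (1:ℝ)/(m:ℝ) * (q0 x * ∑ x' ∈ M x, (Real.log (q0 x' / q0 x)) ^ 2)
    unfold asum
    calc q0 x * ((1/(m:ℝ)) * ∑ x' ∈ M x, |Real.log (q0 x' / q0 x)|) ^ 2
        = q0 x * (1/(m:ℝ))^2 * (∑ x' ∈ M x, |Real.log (q0 x' / q0 x)|)^2 := by ring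
      _ ≤ q0 x * (1/(m:ℝ))^2 * ((m:ℝ) * ∑ x' ∈ M x, (Real.log (q0 x' / q0 x))^2) := by
          refine mul_le_mul_of_nonneg_left h1 ?_
          have := hq0_nonneg x; positivity
      _ = (1:ℝ)/(m:ℝ) * (q0 x * ∑ x' ∈ M x, (Real.log (q0 x' / q0 x))^2) := by
          field_simp
  have hsumK0a : Summable fun x => q0 x * (K 0 x * asum M m q0 x) := by
    refine (summable_q_mul_of_sq hq0_nonneg hsum0 hsuma).congr fun x => ?_
    rw [abs_of_nonneg (hK0n x), abs_of_nonneg (asum_nonneg M m q0 x)]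
  have hsumK1K0 : Summable fun x => q0 x * (K 1 x * K 0 x) := by
    refine (summable_q_mul_of_sq hq0_nonneg hsum1 hsum0).congr fun x => ?_
    rw [abs_of_nonneg (hK1n x), abs_of_nonneg (hK0n x)]
  have hsumK1a : Summable fun x => q0 x * (K 1 x * asum M m q0 x) := by
    refine (summable_q_mul_of_sq hq0_nonneg hsum1 hsuma).congr fun x => ?_
    rw [abs_of_nonneg (hK1n x), abs_of_nonneg (asum_nonneg M m q0 x)]
  have hsumH : Summable fun x => q0 x * Hf x := by
    refine ((hsum0.add (hsumK0a.mul_left 2)).congr fun x => ?_)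
    rw [hHfdef]; ring
  have hsumlf : Summable fun x => q0 x * lf x := by
    refine (((hsumK1K0.add hsumK1a).mul_left 2).congr fun x => ?_)
    rw [hlfdef]; ring
  set Cb : ℝ := ∑' x, q0 x * lf x with hCbdef
  have hCb0 : 0 ≤ Cb :=
    tsum_nonneg fun x => mul_nonneg (hq0_nonneg x) (hlf_nonneg x)
  -- ## Population loss
  have hLpop' : ∀ θ, Lpop θ = ∑' x, q0 x * hhat M m pθ q0 θ x := by
    intro θ
    rw [hLpop]
    exact tsum_congr fun x => by unfold hhat; rw [hM_card]
  have hLpop_sum : ∀ θ ∈ Θ, Summable fun x => q0 x * hhat M m pθ q0 θ x := by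
    intro θ hθ
    refine Summable.of_abs (Summable.of_nonneg_of_le (fun x => abs_nonneg _) (fun x => ?_) hsumH)
    rw [abs_mul, abs_of_nonneg (hq0_nonneg x)]
    exact mul_le_mul_of_nonneg_left (hh_env θ hθ x) (hq0_nonneg x)
  have hLpop_lip : ∀ θ ∈ Θ, ∀ θ' ∈ Θ, |Lpop θ - Lpop θ'| ≤ Cb * ‖θ - θ'‖ := by
    intro θ hθ θ' hθ'
    rw [hLpop' θ, hLpop' θ', ← Summable.tsum_sub (hLpop_sum θ hθ) (hLpop_sum θ' hθ')]
    have hb : ∀ x, |q0 x * hhat M m pθ q0 θ x - q0 x * hhat M m pθ q0 θ' x|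
        ≤ q0 x * lf x * ‖θ - θ'‖ := by
      intro x
      by_cases hx : x ∈ S
      · rw [← mul_sub, abs_mul, abs_of_nonneg (hq0_nonneg x), mul_assoc]
        exact mul_le_mul_of_nonneg_left (hh_lip x hx θ hθ θ' hθ') (hq0_nonneg x)
      · rw [hq0_of_not_mem x hx]; simp
    have h1 := abs_tsum_le_tsum_of_le (g := fun x =>
        q0 x * hhat M m pθ q0 θ x - q0 x * hhat M m pθ q0 θ' x)
      (b := fun x => q0 x * lf x * ‖θ - θ'‖) (hsumlf.mul_right _) hb
    calc |∑' x, (q0 x * hhat M m pθ q0 θ x - q0 x * hhat M m pθ q0 θ' x)|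
        ≤ ∑' x, q0 x * lf x * ‖θ - θ'‖ := h1
      _ = Cb * ‖θ - θ'‖ := by rw [tsum_mul_right, hCbdef]
  -- ## Empirical loss rewrite
  have hLhat' : ∀ n (ω : Ω) θ, Lhat n ω θ
      = (n:ℝ)⁻¹ * ∑ i ∈ Finset.range n, hhat M m pθ (qhat n ω) θ (X i ω) := by
    intro n ω θ
    rw [hLhat, one_div]
    congr 1
    refine Finset.sum_congr rfl fun i _ => ?_
    unfold hhat
    rw [hM_card]
  -- ## Nets
  have hTB : TotallyBounded Θ := hΘ_bounded.isCompact_closure.totallyBounded.subset subset_closure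
  have hnet : ∀ k : ℕ, ∃ T : Set (Fin d → ℝ), T ⊆ Θ ∧ T.Finite ∧
      ∀ θ ∈ Θ, ∃ t ∈ T, dist θ t < 1/((k:ℝ)+1) := by
    intro k
    have hεk : (0:ℝ) < 1/((k:ℝ)+1) := by positivity
    obtain ⟨T, hT1, hT2, hT3⟩ := (totallyBounded_iff_subset.mp hTB) _ (Metric.dist_mem_uniformity hεk)
    refine ⟨T, hT1, hT2, fun θ hθ => ?_⟩
    obtain ⟨t, ht, hmem⟩ := Set.mem_iUnion₂.mp (hT3 hθ)
    exact ⟨t, ht, by simpa using hmem⟩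
  choose T hTsub hTfin hTcov using hnet
  -- ## Tail pack from A2
  obtain ⟨F, b, hF_mono, hF_exh, hb_nonneg, hb_sum, N0, hdom⟩ :
      ∃ (F : ℕ → Finset 𝒳) (b : 𝒳 → ℝ), Monotone F ∧ (∀ x : 𝒳, ∃ k, x ∈ F k) ∧
        (∀ x, 0 ≤ b x) ∧ (Summable fun x => q0 x * b x) ∧
        ∃ N0 : ℕ, ∀ n, N0 ≤ n → ∀ (ω' : Ω) (k : ℕ) (x : 𝒳), x ∉ F k →
          2 * K 0 x * deltaa M m q0 (qhat n ω') x ≤ b x := by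
    rcases hA2 with hfin | ⟨hinf, ⟨c, hc, hexp⟩, Kq0, hKq0, γ, hγ, Khat, hKhat0, hKhatB, hq0bd, hqhatbd⟩
    · letI : Finite 𝒳 := hfin
      letI : Fintype 𝒳 := Fintype.ofFinite 𝒳
      refine ⟨fun _ => Finset.univ, fun _ => 0, monotone_const,
        fun x => ⟨0, Finset.mem_univ x⟩, fun _ => le_rfl, by simpa using summable_zero,
        0, fun n _ ω' k x hx => absurd (Finset.mem_univ x) hx⟩
    · obtain ⟨B, hB⟩ := hKhatB
      rw [Filter.eventually_map] at hB
      obtain ⟨N0, hN0⟩ := Filter.eventually_atTop.mp hB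
      set B' : ℝ := max B 0 with hB'def
      have hB'0 : 0 ≤ B' := le_max_right _ _
      obtain ⟨e⟩ : Nonempty (𝒳 ≃ ℕ) := nonempty_equiv_of_countable
      have hγ0 : (0:ℝ) < γ := lt_trans zero_lt_one hγ
      obtain ⟨C, hC0, hCle⟩ := exists_sq_one_add_rpow_le_exp hγ0 hc
      have h1p : ∀ x : 𝒳, (0:ℝ) ≤ 1 + nrmX x ^ γ := fun x => by
        have := Real.rpow_nonneg (hnrmX x) γ; linarith
      have hs2 : Summable fun x => q0 x * (1 + nrmX x ^ γ) ^ 2 := by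
        refine Summable.of_nonneg_of_le
          (fun x => mul_nonneg (hq0_nonneg x) (sq_nonneg _)) (fun x => ?_) (hexp.mul_left C)
        calc q0 x * (1 + nrmX x ^ γ) ^ 2 ≤ q0 x * (C * Real.exp (c * nrmX x)) :=
              mul_le_mul_of_nonneg_left (hCle _ (hnrmX x)) (hq0_nonneg x)
          _ = C * (q0 x * Real.exp (c * nrmX x)) := by ring
      have hprod2 : Summable fun x => q0 x * (K 0 x * (1 + nrmX x ^ γ)) := by
        refine (summable_q_mul_of_sq hq0_nonneg hsum0 hs2).congr fun x => ?_
        rw [abs_of_nonneg (hK0n x), abs_of_nonneg (h1p x)]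
      refine ⟨fun k => (Finset.range k).image e.symm,
        fun x => 2 * K 0 x * ((B' + Kq0) * (1 + nrmX x ^ γ)),
        fun k1 k2 hk => Finset.image_subset_image (Finset.range_subset_range.mpr hk),
        fun x => ⟨e x + 1, Finset.mem_image.mpr
          ⟨e x, Finset.mem_range.mpr (Nat.lt_succ_self _), e.symm_apply_apply x⟩⟩,
        fun x => by
          have := hK0n x; have := h1p x
          positivity,
        ?_, N0, ?_⟩
      · refine ((hprod2.mul_left (2 * (B' + Kq0))).congr fun x => by ring)
      · intro n hn ω' k x hx
        have hKn : Khat n ≤ B' := le_trans (hN0 n hn) (le_max_left _ _)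
        have h1 : deltaa M m q0 (qhat n ω') x ≤ (B' + Kq0) * (1 + nrmX x ^ γ) := by
          unfold deltaa
          have hterm : ∀ x' ∈ M x,
              |Real.log (qhat n ω' x' / qhat n ω' x) - Real.log (q0 x' / q0 x)|
              ≤ (B' + Kq0) * (1 + nrmX x ^ γ) := by
            intro x' hx'
            have ha2 := hqhatbd n ω' x x' hx'
            have hb2 := hq0bd x x' hx'
            calc |Real.log (qhat n ω' x' / qhat n ω' x) - Real.log (q0 x' / q0 x)|
                ≤ |Real.log (qhat n ω' x' / qhat n ω' x)| + |Real.log (q0 x' / q0 x)| :=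
                  abs_sub _ _
              _ ≤ Khat n * (1 + nrmX x ^ γ) + Kq0 * (1 + nrmX x ^ γ) := add_le_add ha2 hb2
              _ ≤ (B' + Kq0) * (1 + nrmX x ^ γ) := by nlinarith [h1p x]
          calc (1/(m:ℝ)) * ∑ x' ∈ M x,
                |Real.log (qhat n ω' x' / qhat n ω' x) - Real.log (q0 x' / q0 x)|
              ≤ (1/(m:ℝ)) * ∑ _x' ∈ M x, ((B' + Kq0) * (1 + nrmX x ^ γ)) :=
                mul_le_mul_of_nonneg_left (Finset.sum_le_sum hterm) (by positivity)
            _ = (B' + Kq0) * (1 + nrmX x ^ γ) := by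
                rw [Finset.sum_const, hM_card, nsmul_eq_mul]
                field_simp
        calc 2 * K 0 x * deltaa M m q0 (qhat n ω') x
            ≤ 2 * K 0 x * ((B' + Kq0) * (1 + nrmX x ^ γ)) := by
              refine mul_le_mul_of_nonneg_left h1 ?_
              have := hK0n x; positivity
          _ = 2 * K 0 x * ((B' + Kq0) * (1 + nrmX x ^ γ)) := rfl
  -- tail functions
  set fk : ℕ → 𝒳 → ℝ := fun k x => if x ∈ F k then 0 else b x with hfkdef
  have hfk_nonneg : ∀ k x, 0 ≤ fk k x := fun k x => by
    rw [hfkdef]; dsimp only; split_ifs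
    exacts [le_rfl, hb_nonneg x]
  have hfk_le_b : ∀ k x, fk k x ≤ b x := fun k x => by
    rw [hfkdef]; dsimp only; split_ifs
    exacts [hb_nonneg x, le_rfl]
  set tau : ℕ → ℝ := fun k => ∑' x, q0 x * fk k x with htaudef
  have htau0 : Tendsto tau atTop (𝓝 0) := by
    have hcompl := tendsto_tsum_compl_atTop_zero (fun x => q0 x * b x)
    have hmono : Tendsto F atTop atTop := tendsto_atTop_finset_of_monotone hF_mono hF_exh
    have hcomp := hcompl.comp hmono
    refine hcomp.congr fun k => ?_
    show (∑' (x : {x // x ∉ F k}), q0 x * b x) = tau k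
    rw [htaudef]
    dsimp only
    have hsupp : Function.support (fun x => q0 x * fk k x) ⊆ {x | x ∉ F k} := by
      intro x hx
      by_contra hmem
      simp only [Set.mem_setOf_eq, not_not] at hmem
      apply hx
      rw [hfkdef]
      simp [hmem]
    rw [← tsum_subtype_eq_of_support_subset hsupp]
    refine tsum_congr fun z => ?_
    have hz : (z : 𝒳) ∉ F k := z.2
    rw [hfkdef]
    simp [hz]
  -- ## Almost sure events
  have hslln : ∀ (f : 𝒳 → ℝ), (Summable fun x => q0 x * |f x|) →
      ∀ᵐ ω ∂μ, Tendsto (fun n : ℕ => (n : ℝ)⁻¹ * ∑ i ∈ Finset.range n, f (X i ω)) atTop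
        (𝓝 (∑' x, q0 x * f x)) :=
    fun f hf => slln_discrete μ q0 hq0_nonneg X hX_meas hX_dist hX_indep f hf
  have hE1 : ∀ᵐ ω ∂μ, ∀ i, X i ω ∈ S := by
    rw [ae_all_iff]
    intro i
    have hpre : X i ⁻¹' Sᶜ = ⋃ x ∈ Sᶜ, X i ⁻¹' {x} := by
      ext ω'
      simp only [Set.mem_preimage, Set.mem_iUnion, Set.mem_singleton_iff]
      exact ⟨fun hh => ⟨X i ω', hh, rfl⟩, fun ⟨x, hx, hh⟩ => hh ▸ hx⟩
    have hnull : μ (X i ⁻¹' Sᶜ) = 0 := by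
      rw [hpre]
      refine (measure_biUnion_null_iff (Set.to_countable Sᶜ)).mpr fun x hx => ?_
      rw [hX_dist i x, hq0_of_not_mem x hx, ENNReal.ofReal_zero]
    filter_upwards [measure_eq_zero_iff_ae_notMem.mp hnull] with ω' hω'
    simpa using hω'
  have hE2 : ∀ᵐ ω ∂μ, ∀ x : 𝒳, Tendsto
      (fun n : ℕ => (n:ℝ)⁻¹ * ∑ i ∈ Finset.range n, (if X i ω = x then (1:ℝ) else 0))
      atTop (𝓝 (q0 x)) := by
    rw [ae_all_iff]
    intro x
    have hsum : Summable fun y => q0 y * |if y = x then (1:ℝ) else 0| := by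
      refine Summable.of_nonneg_of_le (fun y => mul_nonneg (hq0_nonneg y) (abs_nonneg _))
        (fun y => ?_) hq0_summable
      split_ifs <;> simp [hq0_nonneg y]
    have hval : (∑' y, q0 y * (if y = x then (1:ℝ) else 0)) = q0 x := by
      rw [tsum_eq_single x (fun y hy => by simp [hy])]
      simp
    filter_upwards [hslln (fun y => if y = x then (1:ℝ) else 0) hsum] with ω' hω'
    rw [hval] at hω'
    exact hω'
  have hE3 : ∀ᵐ ω ∂μ, Tendsto
      (fun n : ℕ => (n:ℝ)⁻¹ * ∑ i ∈ Finset.range n, lf (X i ω)) atTop (𝓝 Cb) := by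
    have hsum : Summable fun x => q0 x * |lf x| := by
      refine hsumlf.congr fun x => ?_
      rw [abs_of_nonneg (hlf_nonneg x)]
    filter_upwards [hslln lf hsum] with ω' hω'
    exact hω'
  have hE4 : ∀ᵐ ω ∂μ, ∀ k : ℕ, ∀ t ∈ T k, Tendsto
      (fun n : ℕ => (n:ℝ)⁻¹ * ∑ i ∈ Finset.range n, hhat M m pθ q0 t (X i ω)) atTop
      (𝓝 (Lpop t)) := by
    rw [ae_all_iff]
    intro k
    rw [ae_ball_iff (hTfin k).countable]
    intro t ht
    have htΘ : t ∈ Θ := hTsub k ht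
    have hsum : Summable fun x => q0 x * |hhat M m pθ q0 t x| := by
      refine Summable.of_nonneg_of_le (fun x => mul_nonneg (hq0_nonneg x) (abs_nonneg _))
        (fun x => mul_le_mul_of_nonneg_left (hh_env t htΘ x) (hq0_nonneg x)) hsumH
    filter_upwards [hslln _ hsum] with ω' hω'
    rwa [← hLpop' t] at hω'
  have hE5 : ∀ᵐ ω ∂μ, ∀ k : ℕ, Tendsto
      (fun n : ℕ => (n:ℝ)⁻¹ * ∑ i ∈ Finset.range n, fk k (X i ω)) atTop (𝓝 (tau k)) := by
    rw [ae_all_iff]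
    intro k
    have hsum : Summable fun x => q0 x * |fk k x| := by
      refine Summable.of_nonneg_of_le (fun x => mul_nonneg (hq0_nonneg x) (abs_nonneg _))
        (fun x => ?_) hb_sum
      rw [abs_of_nonneg (hfk_nonneg k x)]
      exact mul_le_mul_of_nonneg_left (hfk_le_b k x) (hq0_nonneg x)
    filter_upwards [hslln _ hsum] with ω' hω'
    exact hω'
  -- ## Fix a good ω
  filter_upwards [hE1, hE2, hE3, hE4, hE5] with ω hω1 hω2 hω3 hω4 hω5
  have hαZ : (0:ℝ) < α * Zdag := mul_pos hα hZ
  have hden : ∀ n : ℕ, (0:ℝ) < (n:ℝ) + α * Zdag := fun n =>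
    add_pos_of_nonneg_of_pos (Nat.cast_nonneg n) hαZ
  have hqhat_tendsto : ∀ x ∈ S, Tendsto (fun n : ℕ => qhat n ω x) atTop (𝓝 (q0 x)) := by
    intro x hx
    have hcnt := hω2 x
    have hlim1 : Tendsto (fun n : ℕ => (n:ℝ)⁻¹ * (α * qdag x)) atTop (𝓝 0) := by
      refine (tendsto_const_div_atTop_nhds_zero_nat (α * qdag x)).congr fun n => ?_
      rw [div_eq_inv_mul]
    have hd2 : Tendsto (fun n : ℕ => (n:ℝ) + α * Zdag) atTop atTop :=
      tendsto_atTop_add_const_right _ _ tendsto_natCast_atTop_atTop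
    have hinv : Tendsto (fun n : ℕ => ((n:ℝ) + α * Zdag)⁻¹) atTop (𝓝 0) :=
      hd2.inv_tendsto_atTop
    have hlim2 : Tendsto (fun n : ℕ => (n:ℝ) / ((n:ℝ) + α * Zdag)) atTop (𝓝 1) := by
      have h3 : Tendsto (fun n : ℕ => 1 - (α*Zdag) * ((n:ℝ) + α * Zdag)⁻¹) atTop
          (𝓝 (1 - (α*Zdag) * 0)) := tendsto_const_nhds.sub (tendsto_const_nhds.mul hinv)
      rw [mul_zero, sub_zero] at h3
      refine h3.congr fun n => ?_
      have hne : ((n:ℝ) + α * Zdag) ≠ 0 := ne_of_gt (hden n)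
      field_simp
      ring
    have heq : ∀ᶠ n : ℕ in atTop,
        ((n:ℝ)⁻¹ * (∑ i ∈ Finset.range n, if X i ω = x then (1:ℝ) else 0)
          + (n:ℝ)⁻¹ * (α * qdag x)) * ((n:ℝ) / ((n:ℝ) + α * Zdag)) = qhat n ω x := by
      filter_upwards [eventually_ge_atTop 1] with n hn
      have hn0 : (0:ℝ) < (n:ℝ) := by exact_mod_cast hn
      have hne1 : (n:ℝ) ≠ 0 := ne_of_gt hn0
      have hne2 : ((n:ℝ) + α * Zdag) ≠ 0 := ne_of_gt (hden n)
      rw [hqhat]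
      field_simp
      try ring
    have hfin := Filter.Tendsto.congr' heq ((hcnt.add hlim1).mul hlim2)
    simpa using hfin
  have hΔ : ∀ x ∈ S, Tendsto (fun n : ℕ => deltaa M m q0 (qhat n ω) x) atTop (𝓝 0) := by
    intro x hx
    have hxq : (0:ℝ) < q0 x := hx
    have hterm : ∀ x' ∈ M x, Tendsto (fun n : ℕ =>
        |Real.log (qhat n ω x' / qhat n ω x) - Real.log (q0 x' / q0 x)|) atTop (𝓝 0) := by
      intro x' hx'
      have hx'S : x' ∈ S := hMS x x' hx'
      have hx'q : (0:ℝ) < q0 x' := hx'S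
      have hratio : Tendsto (fun n : ℕ => qhat n ω x' / qhat n ω x) atTop
          (𝓝 (q0 x' / q0 x)) :=
        (hqhat_tendsto x' hx'S).div (hqhat_tendsto x hx) (ne_of_gt hxq)
      have hlog : Tendsto (fun n : ℕ => Real.log (qhat n ω x' / qhat n ω x)) atTop
          (𝓝 (Real.log (q0 x' / q0 x))) :=
        ((Real.continuousAt_log (ne_of_gt (div_pos hx'q hxq))).tendsto).comp hratio
      have h6 := (hlog.sub (tendsto_const_nhds (x := Real.log (q0 x' / q0 x)))).abs
      simpa using h6
    have hsum : Tendsto (fun n : ℕ => ∑ x' ∈ M x,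
        |Real.log (qhat n ω x' / qhat n ω x) - Real.log (q0 x' / q0 x)|) atTop (𝓝 0) := by
      have h7 := tendsto_finset_sum (M x) (fun x' hx' => hterm x' hx')
      simpa using h7
    have h8 := hsum.const_mul ((1:ℝ)/(m:ℝ))
    unfold deltaa
    simpa using h8
  -- ## Uniform convergence of the intermediate empirical loss
  have hB : ∀ δ : ℝ, 0 < δ → ∀ᶠ n : ℕ in atTop, ∀ θ ∈ Θ,
      |(n:ℝ)⁻¹ * ∑ i ∈ Finset.range n, hhat M m pθ q0 θ (X i ω) - Lpop θ| < δ := by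
    intro δ hδ
    obtain ⟨k, hk⟩ : ∃ k : ℕ, (2 * Cb + 1) * (1/((k:ℝ)+1)) < δ/2 := by
      have h1 : Tendsto (fun k : ℕ => (2*Cb+1) * (1/((k:ℝ)+1))) atTop (𝓝 0) := by
        have h0 := tendsto_one_div_add_atTop_nhds_zero_nat (𝕜 := ℝ)
        simpa using h0.const_mul (2*Cb+1)
      exact (h1.eventually_lt_const (by linarith)).exists
    have hev1 : ∀ᶠ n : ℕ in atTop, ∀ t ∈ T k,
        |(n:ℝ)⁻¹ * ∑ i ∈ Finset.range n, hhat M m pθ q0 t (X i ω) - Lpop t| < δ/4 := by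
      rw [eventually_all_finite (hTfin k)]
      intro t ht
      have h3 : Tendsto (fun n : ℕ =>
          |(n:ℝ)⁻¹ * ∑ i ∈ Finset.range n, hhat M m pθ q0 t (X i ω) - Lpop t|)
          atTop (𝓝 0) := by
        simpa using ((hω4 k t ht).sub (tendsto_const_nhds (x := Lpop t))).abs
      exact h3.eventually_lt_const (by linarith)
    have hev2 : ∀ᶠ n : ℕ in atTop,
        (n:ℝ)⁻¹ * ∑ i ∈ Finset.range n, lf (X i ω) < Cb + 1 :=
      hω3.eventually_lt_const (by linarith)
    filter_upwards [hev1, hev2] with n h1 h2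
    intro θ hθ
    obtain ⟨t, ht, hdist⟩ := hTcov k θ hθ
    have htΘ : t ∈ Θ := hTsub k ht
    have hd : ‖θ - t‖ ≤ 1/((k:ℝ)+1) := by
      rw [← dist_eq_norm]; exact hdist.le
    have hemp : |(n:ℝ)⁻¹ * ∑ i ∈ Finset.range n, hhat M m pθ q0 θ (X i ω)
        - (n:ℝ)⁻¹ * ∑ i ∈ Finset.range n, hhat M m pθ q0 t (X i ω)|
        ≤ ((n:ℝ)⁻¹ * ∑ i ∈ Finset.range n, lf (X i ω)) * ‖θ - t‖ := by
      rw [← mul_sub, ← Finset.sum_sub_distrib, abs_mul,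
        abs_of_nonneg (inv_nonneg.mpr (Nat.cast_nonneg n) : (0:ℝ) ≤ (n:ℝ)⁻¹)]
      have h4 : |∑ i ∈ Finset.range n,
          (hhat M m pθ q0 θ (X i ω) - hhat M m pθ q0 t (X i ω))|
          ≤ ∑ i ∈ Finset.range n, lf (X i ω) * ‖θ - t‖ :=
        le_trans (Finset.abs_sum_le_sum_abs _ _)
          (Finset.sum_le_sum fun i _ => hh_lip (X i ω) (hω1 i) θ hθ t htΘ)
      calc (n:ℝ)⁻¹ * |∑ i ∈ Finset.range n,
            (hhat M m pθ q0 θ (X i ω) - hhat M m pθ q0 t (X i ω))|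
          ≤ (n:ℝ)⁻¹ * ∑ i ∈ Finset.range n, lf (X i ω) * ‖θ - t‖ :=
            mul_le_mul_of_nonneg_left h4 (inv_nonneg.mpr (Nat.cast_nonneg n))
        _ = ((n:ℝ)⁻¹ * ∑ i ∈ Finset.range n, lf (X i ω)) * ‖θ - t‖ := by
            rw [← Finset.sum_mul]; ring
    have hpop := hLpop_lip θ hθ t htΘ
    have h5 := h1 t ht
    have hCn0 : 0 ≤ (n:ℝ)⁻¹ * ∑ i ∈ Finset.range n, lf (X i ω) :=
      mul_nonneg (inv_nonneg.mpr (Nat.cast_nonneg n))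
        (Finset.sum_nonneg fun i _ => hlf_nonneg _)
    have hbound1 : ((n:ℝ)⁻¹ * ∑ i ∈ Finset.range n, lf (X i ω)) * ‖θ - t‖
        ≤ (Cb+1) * (1/((k:ℝ)+1)) :=
      mul_le_mul h2.le hd (norm_nonneg _) (by linarith)
    have hbound2 : |Lpop t - Lpop θ| ≤ Cb * (1/((k:ℝ)+1)) := by
      rw [abs_sub_comm]
      refine le_trans hpop ?_
      have h6 : ‖θ - t‖ ≤ 1/((k:ℝ)+1) := hd
      exact mul_le_mul_of_nonneg_left h6 hCb0
    have t1 := abs_sub_le ((n:ℝ)⁻¹ * ∑ i ∈ Finset.range n, hhat M m pθ q0 θ (X i ω))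
      ((n:ℝ)⁻¹ * ∑ i ∈ Finset.range n, hhat M m pθ q0 t (X i ω)) (Lpop θ)
    have t2 := abs_sub_le ((n:ℝ)⁻¹ * ∑ i ∈ Finset.range n, hhat M m pθ q0 t (X i ω))
      (Lpop t) (Lpop θ)
    nlinarith [hemp, hbound1, hbound2, h5, hk]
  -- ## Plug-in error control
  have hA : ∀ δ : ℝ, 0 < δ → ∀ᶠ n : ℕ in atTop, ∀ θ ∈ Θ,
      |Lhat n ω θ - (n:ℝ)⁻¹ * ∑ i ∈ Finset.range n, hhat M m pθ q0 θ (X i ω)| < δ := by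
    intro δ hδ
    obtain ⟨k, hk⟩ : ∃ k : ℕ, tau k < δ/4 :=
      (htau0.eventually_lt_const (by linarith)).exists
    have hWev : ∀ᶠ n : ℕ in atTop, ∀ x ∈ F k, x ∈ S →
        2 * K 0 x * deltaa M m q0 (qhat n ω) x < δ/4 := by
      rw [eventually_all_finset]
      intro x hxF
      by_cases hx : x ∈ S
      · have h5 : Tendsto (fun n : ℕ => 2 * K 0 x * deltaa M m q0 (qhat n ω) x)
            atTop (𝓝 0) := by
          simpa using (hΔ x hx).const_mul (2 * K 0 x)
        filter_upwards [h5.eventually_lt_const (show (0:ℝ) < δ/4 by linarith)] with n hn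
        exact fun _ => hn
      · exact Filter.Eventually.of_forall fun n hxS => absurd hxS hx
    have hfkev : ∀ᶠ n : ℕ in atTop,
        (n:ℝ)⁻¹ * ∑ i ∈ Finset.range n, fk k (X i ω) < tau k + δ/4 :=
      (hω5 k).eventually_lt_const (by linarith)
    filter_upwards [hWev, hfkev, eventually_ge_atTop N0, eventually_ge_atTop 1]
      with n h1 h2 h3 h4
    intro θ hθ
    have hn0 : (0:ℝ) < (n:ℝ) := by exact_mod_cast h4
    have hpersample : ∀ i ∈ Finset.range n,
        |hhat M m pθ (qhat n ω) θ (X i ω) - hhat M m pθ q0 θ (X i ω)|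
          ≤ δ/4 + fk k (X i ω) := by
      intro i _
      have hbase := hhat_sub_le M m hm pθ q0 (qhat n ω) θ (X i ω) (hM_card _)
        (K 0 (X i ω)) (fun x' hx' => hK0 (X i ω) x' hx' θ hθ)
      by_cases hmem : X i ω ∈ F k
      · have h6 := h1 (X i ω) hmem (hω1 i)
        have h7 := hfk_nonneg k (X i ω)
        linarith
      · have h6 := hdom n h3 ω k (X i ω) hmem
        have h7 : fk k (X i ω) = b (X i ω) := by rw [hfkdef]; simp [hmem]
        linarith
    rw [hLhat' n ω θ, ← mul_sub, ← Finset.sum_sub_distrib, abs_mul,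
      abs_of_nonneg (inv_nonneg.mpr (Nat.cast_nonneg n) : (0:ℝ) ≤ (n:ℝ)⁻¹)]
    have h8 : |∑ i ∈ Finset.range n,
        (hhat M m pθ (qhat n ω) θ (X i ω) - hhat M m pθ q0 θ (X i ω))|
        ≤ ∑ i ∈ Finset.range n, (δ/4 + fk k (X i ω)) :=
      le_trans (Finset.abs_sum_le_sum_abs _ _) (Finset.sum_le_sum hpersample)
    have h9 : ∑ i ∈ Finset.range n, (δ/4 + fk k (X i ω))
        = (n:ℝ) * (δ/4) + ∑ i ∈ Finset.range n, fk k (X i ω) := by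
      rw [Finset.sum_add_distrib, Finset.sum_const, Finset.card_range, nsmul_eq_mul]
    calc (n:ℝ)⁻¹ * |∑ i ∈ Finset.range n,
          (hhat M m pθ (qhat n ω) θ (X i ω) - hhat M m pθ q0 θ (X i ω))|
        ≤ (n:ℝ)⁻¹ * ((n:ℝ) * (δ/4) + ∑ i ∈ Finset.range n, fk k (X i ω)) := by
          rw [← h9]
          exact mul_le_mul_of_nonneg_left h8 (inv_nonneg.mpr (Nat.cast_nonneg n))
      _ = δ/4 + (n:ℝ)⁻¹ * ∑ i ∈ Finset.range n, fk k (X i ω) := by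
          field_simp
      _ < δ/4 + (tau k + δ/4) := by linarith
      _ < δ := by linarith
  -- ## Uniform convergence
  have hUC : ∀ δ : ℝ, 0 < δ → ∀ᶠ n : ℕ in atTop, ∀ θ ∈ Θ,
      |Lhat n ω θ - Lpop θ| < δ := by
    intro δ hδ
    filter_upwards [hA (δ/2) (by linarith), hB (δ/2) (by linarith)] with n h1 h2
    intro θ hθ
    have t1 := abs_sub_le (Lhat n ω θ)
      ((n:ℝ)⁻¹ * ∑ i ∈ Finset.range n, hhat M m pθ q0 θ (X i ω)) (Lpop θ)
    have h3 := h1 θ hθ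
    have h4 := h2 θ hθ
    linarith
  -- ## Conclusion via the well-separated minimum
  have key : ∀ ε : ℝ, 0 < ε → ∀ᶠ n : ℕ in atTop, l2norm (θhat n ω - θstar) < ε := by
    intro ε hε
    obtain ⟨δ, hδ, hsep⟩ := hθstar_sep ε hε
    filter_upwards [hUC (δ/3) (by linarith)] with n hn
    by_contra hcon
    push_neg at hcon
    have h1 := hsep (θhat n ω) (hθhat n ω).1 hcon
    have e1 := hn (θhat n ω) (hθhat n ω).1
    have e2 := hn θstar hθstar_mem
    have e3 : Lhat n ω (θhat n ω) ≤ Lhat n ω θstar :=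
      isMinOn_iff.mp (hθhat n ω).2 θstar hθstar_mem
    have a1 := abs_lt.mp e1
    have a2 := abs_lt.mp e2
    linarith [a1.1, a1.2, a2.1, a2.2]
  have hl2 : Tendsto (fun n : ℕ => l2norm (θhat n ω - θstar)) atTop (𝓝 0) := by
    rw [Metric.tendsto_atTop]
    intro ε hε
    obtain ⟨N, hN⟩ := eventually_atTop.mp (key ε hε)
    refine ⟨N, fun n hn => ?_⟩
    rw [Real.dist_eq, sub_zero, abs_of_nonneg (l2norm_nonneg _)]
    exact hN n hn
  have hnorm : Tendsto (fun n : ℕ => ‖θhat n ω - θstar‖) atTop (𝓝 0) :=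
    squeeze_zero (fun n => norm_nonneg _) (fun n => norm_le_l2norm _) hl2
  exact tendsto_iff_norm_sub_tendsto_zero.mpr hnorm
end
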